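/- arXiv:1601.03987 — 2 statements merged into one kernel-verified Lean document; each statement's English description precedes it below -/
import Mathlib

section
/- The kernel of the map Ψ : 𝒮 → R' presenting the monomial multi-Rees algebra 𝓡_in is generated, as an ideal of 𝒮, by homogeneous binomials of degree 2, i.e., by elements of the form Z_1 − Z_2 where Z_1 and Z_2 are degree-2 monomials of 𝒮 with Ψ(Z_1) = Ψ(Z_2) (with respect to the standard grading on 𝒮 in which every variable has degree 1). -/
open MvPolynomial

/-- The `t`-minor of the generic `m × n` matrix of indeterminates, viewed inside the
polynomial ring with variable set `(Fin m × Fin n) ⊕ σ`: rows `1,…,t` and columns `c`. -/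
noncomputable def minorX (K : Type*) [Field K] (m n : ℕ) (σ : Type*) {t : ℕ}
    (c : Fin t → Fin n) : MvPolynomial ((Fin m × Fin n) ⊕ σ) K :=
  Matrix.det (Matrix.of fun i j : Fin t =>
    if h : (i : ℕ) < m then
      (X (Sum.inl (⟨(i : ℕ), h⟩, c j)) : MvPolynomial ((Fin m × Fin n) ⊕ σ) K)
    else 0)

/-- The diagonal monomial `x_{1 b₁} ⋯ x_{t b_t}`, viewed inside the polynomial ring with
variable set `(Fin m × Fin n) ⊕ σ`. -/
noncomputable def diagX (K : Type*) [Field K] (m n : ℕ) (σ : Type*) {t : ℕ}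
    (c : Fin t → Fin n) : MvPolynomial ((Fin m × Fin n) ⊕ σ) K :=
  ∏ j : Fin t,
    if h : (j : ℕ) < m then
      (X (Sum.inl (⟨(j : ℕ), h⟩, c j)) : MvPolynomial ((Fin m × Fin n) ⊕ σ) K)
    else 0

/-- Admissible column selections for a `t`-minor (or diagonal) of `X_t(a)`:
strictly increasing columns, all with (1-indexed) column number `≥ a`. -/
def NEcols (n t a : ℕ) (c : Fin t → Fin n) : Prop :=
  StrictMono c ∧ ∀ j, a ≤ (c j : ℕ) + 1

/-- A valid pair `(t,a)`: `1 ≤ t`, `1 ≤ a`, `t ≤ m`, `t + a ≤ n + 1`. -/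
def ValidPair (m n : ℕ) (p : ℕ × ℕ) : Prop :=
  1 ≤ p.1 ∧ 1 ≤ p.2 ∧ p.1 ≤ m ∧ p.1 + p.2 ≤ n + 1

/-- The index type of the Rees variables `T_{ta}`: valid pairs `(t,a)`. -/
def TAIdx (m n : ℕ) : Type := {p : ℕ × ℕ // ValidPair m n p}

/-- The ambient polynomial ring `R' = K[x_{ij}, T_{ta}]`. -/
abbrev ReesAmbient (K : Type*) [Field K] (m n : ℕ) :=
  MvPolynomial ((Fin m × Fin n) ⊕ TAIdx m n) K

/-- Index data for a presentation variable `z_{a,δ}`: a valid pair `(t,a)` together with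
a `t`-minor `δ` of `X_t(a)` (given by its columns). -/
structure ZData (m n : ℕ) where
  t : ℕ
  a : ℕ
  valid : ValidPair m n (t, a)
  c : Fin t → Fin n
  hc : NEcols n t a c

/-- The presentation polynomial ring `𝒮 = K[x_{ij}, z_{a,δ}]`. -/
abbrev PresRing (K : Type*) [Field K] (m n : ℕ) :=
  MvPolynomial ((Fin m × Fin n) ⊕ ZData m n) K

/-- The presentation map `Ψ : 𝒮 → R'`, `x_{ij} ↦ x_{ij}`, `z_{a,δ} ↦ in(δ) · T_{t a}`;
its image is the monomial multi-Rees algebra `𝓡_in`. -/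
noncomputable def PsiMap (K : Type*) [Field K] (m n : ℕ) :
    PresRing K m n →ₐ[K] ReesAmbient K m n :=
  aeval fun v => match v with
    | Sum.inl q => X (Sum.inl q)
    | Sum.inr z => diagX K m n (TAIdx m n) z.c * X (Sum.inr ⟨(z.t, z.a), z.valid⟩)

namespace Quad

abbrev SV (m n : ℕ) := (Fin m × Fin n) ⊕ ZData m n
abbrev RV (m n : ℕ) := (Fin m × Fin n) ⊕ TAIdx m n

variable {K : Type*} [Field K] {m n : ℕ}

/-- the single for the `j`-th diagonal position. -/
noncomputable def dsing (m n t : ℕ) (c : Fin t → Fin n) (j : ℕ) : RV m n →₀ ℕ :=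
  if h : j < t ∧ j < m then Finsupp.single (Sum.inl (⟨j, h.2⟩, c ⟨j, h.1⟩)) 1 else 0

noncomputable def posSum (m n : ℕ) (t : ℕ) (c : Fin t → Fin n) : RV m n →₀ ℕ :=
  ∑ j ∈ Finset.range t, dsing m n t c j

/-- image exponent vector of each variable. -/
noncomputable def wvar : SV m n → (RV m n →₀ ℕ)
  | Sum.inl q => Finsupp.single (Sum.inl q) 1
  | Sum.inr z => posSum m n z.t z.c + Finsupp.single (Sum.inr ⟨(z.t, z.a), z.valid⟩) 1

/-- image exponent map. -/
noncomputable def img (d : SV m n →₀ ℕ) : RV m n →₀ ℕ := d.sum fun v k => k • wvar v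

theorem img_add (d e : SV m n →₀ ℕ) : img (d + e) = img d + img e :=
  Finsupp.sum_add_index' (fun v => zero_smul ℕ (wvar v)) (fun v k l => add_smul k l (wvar v))

@[simp] theorem img_single (v : SV m n) (k : ℕ) : img (Finsupp.single v k) = k • wvar v :=
  Finsupp.sum_single_index (zero_smul _ _)

@[simp] theorem img_zero : img (0 : SV m n →₀ ℕ) = 0 := Finsupp.sum_zero_index

theorem psi_gen (v : SV m n) :
    PsiMap K m n (X v) = monomial (wvar v) (1 : K) := by
  rw [PsiMap, aeval_X]
  cases v with
  | inl q => simp [wvar, X]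
  | inr z =>
    have htm : z.t ≤ m := z.valid.2.2.1
    show diagX K m n (TAIdx m n) z.c * X (Sum.inr ⟨(z.t, z.a), z.valid⟩) = _
    have hdiag : diagX K m n (TAIdx m n) z.c = monomial (posSum m n z.t z.c) (1 : K) := by
      rw [diagX, posSum, monomial_sum_one, ← Fin.prod_univ_eq_prod_range
        (fun j => monomial (dsing m n z.t z.c j) (1 : K))]
      apply Finset.prod_congr rfl
      intro j _
      have h1 : (j : ℕ) < m := lt_of_lt_of_le j.isLt htm
      rw [dif_pos h1, dsing, dif_pos ⟨j.isLt, h1⟩]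
      simp [X]
    rw [hdiag, wvar]
    rw [X, monomial_mul, mul_one]

theorem psi_monomial (d : SV m n →₀ ℕ) (r : K) :
    PsiMap K m n (monomial d r) = monomial (img d) r := by
  have h1 : (monomial d r : PresRing K m n) = C r * d.prod fun v k => X v ^ k := monomial_eq
  rw [h1, map_mul, Finsupp.prod, map_prod]
  have h2 : ∀ v ∈ d.support, PsiMap K m n (X v ^ d v) = monomial (d v • wvar v) (1:K) := by
    intro v _
    rw [map_pow, psi_gen, monomial_pow, one_pow]
  rw [Finset.prod_congr rfl h2, ← monomial_sum_one]
  have h3 : (PsiMap K m n) (C r) = C r := by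
    rw [show (C r : PresRing K m n) = algebraMap K _ r from rfl, AlgHom.commutes]; rfl
  rw [h3, C_mul_monomial, mul_one]
  rfl


/-- all-degrees binomial set -/
def BinAll (K : Type*) [Field K] (m n : ℕ) : Set (PresRing K m n) :=
  {g : PresRing K m n | ∃ d e : SV m n →₀ ℕ,
    img d = img e ∧ g = monomial d (1:K) - monomial e 1}

theorem ker_mem_span_binAll (f : PresRing K m n) (hf : PsiMap K m n f = 0) :
    f ∈ Ideal.span (BinAll K m n) := by
  classical
  generalize hN : f.support.card = N
  induction N using Nat.strong_induction_on generalizing f with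
  | _ N IH =>
  by_cases h0 : f = 0
  · simp [h0]
  have hsupp : f.support.Nonempty := by
    rw [Finset.nonempty_iff_ne_empty]
    intro h; exact h0 (MvPolynomial.support_eq_empty.mp h)
  obtain ⟨d, hd⟩ := hsupp
  have hcd : coeff d f ≠ 0 := MvPolynomial.mem_support_iff.mp hd
  have hkey : ∃ e ∈ f.support, e ≠ d ∧ img e = img d := by
    by_contra hcon
    push_neg at hcon
    have hΨ : PsiMap K m n f = ∑ e ∈ f.support, monomial (img e) (coeff e f) := by
      conv_lhs => rw [f.as_sum]
      rw [map_sum]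
      exact Finset.sum_congr rfl fun e _ => psi_monomial e _
    have hc : coeff (img d) (PsiMap K m n f) = coeff d f := by
      rw [hΨ, MvPolynomial.coeff_sum]
      rw [Finset.sum_eq_single d]
      · rw [coeff_monomial, if_pos rfl]
      · intro e he hne
        rw [coeff_monomial, if_neg (hcon e he hne)]
      · intro h; exact absurd hd h
    rw [hf] at hc
    simp at hc
    exact hcd hc.symm
  obtain ⟨e, he, hne, him⟩ := hkey
  set b : PresRing K m n := monomial d (1:K) - monomial e 1 with hb
  have hbmem : b ∈ BinAll K m n := ⟨d, e, him.symm, rfl⟩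
  have hbker : PsiMap K m n b = 0 := by
    rw [hb, map_sub, psi_monomial, psi_monomial, him]
    ring
  set g : PresRing K m n := f - C (coeff d f) * b with hg
  have hgker : PsiMap K m n g = 0 := by
    rw [hg, map_sub, hf, map_mul, hbker, mul_zero, sub_zero]
  have hgsupp : g.support ⊆ f.support.erase d := by
    intro x hx
    have hxg : coeff x g ≠ 0 := MvPolynomial.mem_support_iff.mp hx
    have hcx : coeff x g = coeff x f
        - coeff d f * ((if d = x then (1:K) else 0) - if e = x then 1 else 0) := by
      rw [hg, hb]
      simp [coeff_sub, MvPolynomial.coeff_C_mul, coeff_monomial, mul_sub]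
    rcases eq_or_ne x d with rfl | hxd
    · rw [if_pos rfl, if_neg (fun h => hne h)] at hcx
      simp at hcx
      exact absurd hcx hxg
    · rw [Finset.mem_erase]
      refine ⟨hxd, MvPolynomial.mem_support_iff.mpr ?_⟩
      intro hxf
      rw [if_neg (fun h => hxd h.symm), hxf] at hcx
      rcases eq_or_ne e x with rfl | hex
      · exact (MvPolynomial.mem_support_iff.mp he) hxf
      · rw [if_neg hex] at hcx
        simp at hcx
        exact hxg hcx
  have hcard : g.support.card < N := by
    rw [← hN]
    exact lt_of_le_of_lt (Finset.card_le_card hgsupp) (Finset.card_erase_lt_of_mem hd)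
  have hgspan := IH g.support.card hcard g hgker rfl
  have hfg : f = g + C (coeff d f) * b := by rw [hg]; ring
  rw [hfg]
  exact Ideal.add_mem _ hgspan (Ideal.mul_mem_left _ _ (Ideal.subset_span hbmem))


section Coord
variable {K : Type*} [Field K] {m n : ℕ}

theorem dsing_eq {t : ℕ} (c : Fin t → Fin n) {j : ℕ} (hj : j < t) (hjm : j < m) :
    dsing m n t c j = Finsupp.single (Sum.inl (⟨j, hjm⟩, c ⟨j, hj⟩)) 1 := by
  rw [dsing, dif_pos ⟨hj, hjm⟩]

theorem img_apply (d : SV m n →₀ ℕ) (x : RV m n) :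
    img d x = ∑ v ∈ d.support, d v * wvar v x := by
  rw [img, Finsupp.sum, Finsupp.finset_sum_apply]
  exact Finset.sum_congr rfl fun v _ => by simp

theorem le_img {d : SV m n →₀ ℕ} {v : SV m n} (hv : v ∈ d.support) (x : RV m n) :
    wvar v x ≤ img d x := by
  rw [img_apply]
  calc wvar v x ≤ d v * wvar v x :=
        Nat.le_mul_of_pos_left _ (Nat.pos_of_ne_zero (Finsupp.mem_support_iff.mp hv))
    _ ≤ _ := Finset.single_le_sum (f := fun v' => d v' * wvar v' x)
        (fun i _ => Nat.zero_le _) hv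

theorem exists_of_img_ne_zero {d : SV m n →₀ ℕ} {x : RV m n} (h : img d x ≠ 0) :
    ∃ v ∈ d.support, wvar v x ≠ 0 := by
  rw [img_apply] at h
  obtain ⟨v, hv, hne⟩ := Finset.exists_ne_zero_of_sum_ne_zero h
  exact ⟨v, hv, fun h0 => hne (by rw [h0, mul_zero])⟩

theorem posSum_apply_inr {t : ℕ} (c : Fin t → Fin n) (L : TAIdx m n) :
    posSum m n t c (Sum.inr L) = 0 := by
  classical
  rw [posSum, Finsupp.finset_sum_apply]
  apply Finset.sum_eq_zero
  intro j hj
  rw [dsing]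
  split
  · rw [Finsupp.single_apply, if_neg (by simp)]
  · rfl

open Classical in
theorem wvar_inr_apply_inr (z : ZData m n) (L : TAIdx m n) :
    wvar (m := m) (n := n) (Sum.inr z) (Sum.inr L) =
      if (⟨(z.t, z.a), z.valid⟩ : TAIdx m n) = L then 1 else 0 := by
  classical
  rw [wvar]
  rw [Finsupp.add_apply, Finsupp.single_apply, posSum_apply_inr, zero_add]
  by_cases h : (⟨(z.t, z.a), z.valid⟩ : TAIdx m n) = L
  · rw [if_pos h, if_pos (by rw [h])]
  · rw [if_neg h]
    erw [if_neg (fun hh => h (Sum.inr_injective hh))]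

theorem wvar_inl_apply_inr (q : Fin m × Fin n) (L : TAIdx m n) :
    wvar (m := m) (n := n) (Sum.inl q) (Sum.inr L) = 0 := by
  classical
  rw [wvar, Finsupp.single_apply, if_neg (by simp)]

theorem posSum_apply_inl {t : ℕ} (htm : t ≤ m) (c : Fin t → Fin n) (p : Fin m × Fin n) :
    posSum m n t c (Sum.inl p) =
      ∑ j : Fin t, if (((⟨(j : ℕ), lt_of_lt_of_le j.isLt htm⟩ : Fin m), c j) : Fin m × Fin n) = p then 1 else 0 := by
  classical
  rw [posSum, Finsupp.finset_sum_apply,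
    ← Fin.sum_univ_eq_sum_range (fun j => dsing m n t c j (Sum.inl p))]
  apply Finset.sum_congr rfl
  intro j _
  rw [dsing_eq c j.isLt (lt_of_lt_of_le j.isLt htm), Finsupp.single_apply]
  simp

theorem wvar_inr_apply_inl (z : ZData m n) (p : Fin m × Fin n) :
    wvar (m := m) (n := n) (Sum.inr z) (Sum.inl p) = posSum m n z.t z.c (Sum.inl p) := by
  classical
  rw [wvar, Finsupp.add_apply, Finsupp.single_apply, if_neg (by simp), add_zero]

theorem wvar_inr_ne_zero_inl {z : ZData m n} {p : Fin m × Fin n}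
    (h : wvar (m := m) (n := n) (Sum.inr z) (Sum.inl p) ≠ 0) :
    ∃ hj : (p.1 : ℕ) < z.t, z.c ⟨(p.1 : ℕ), hj⟩ = p.2 := by
  classical
  rw [wvar_inr_apply_inl, posSum_apply_inl z.valid.2.2.1] at h
  obtain ⟨j, _, hne⟩ := Finset.exists_ne_zero_of_sum_ne_zero h
  by_cases hc : (((⟨(j : ℕ), lt_of_lt_of_le j.isLt z.valid.2.2.1⟩ : Fin m), z.c j) : Fin m × Fin n) = p
  · have h1 : (p.1 : ℕ) = (j : ℕ) := by rw [← (Prod.ext_iff.mp hc).1]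
    have hj' : (p.1 : ℕ) < z.t := h1 ▸ j.isLt
    refine ⟨hj', ?_⟩
    have : (⟨(p.1 : ℕ), hj'⟩ : Fin z.t) = j := Fin.ext h1
    rw [this]
    exact (Prod.ext_iff.mp hc).2
  · rw [if_neg hc] at hne; exact absurd rfl hne

theorem wvar_cover {z : ZData m n} {j : ℕ} (hj : j < z.t) :
    wvar (m := m) (n := n) (Sum.inr z)
      (Sum.inl (⟨j, lt_of_lt_of_le hj z.valid.2.2.1⟩, z.c ⟨j, hj⟩)) ≠ 0 := by
  classical
  rw [wvar_inr_apply_inl, posSum_apply_inl z.valid.2.2.1]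
  intro h0
  have h1 := Finset.sum_eq_zero_iff.mp h0 ⟨j, hj⟩ (Finset.mem_univ _)
  rw [if_pos rfl] at h1
  exact one_ne_zero h1

theorem wvar_cover' {z : ZData m n} {j : ℕ} (hj : j < z.t) (p : Fin m × Fin n)
    (h1 : (p.1 : ℕ) = j) (h2 : z.c ⟨j, hj⟩ = p.2) :
    wvar (m := m) (n := n) (Sum.inr z) (Sum.inl p) ≠ 0 := by
  classical
  rw [wvar_inr_apply_inl, posSum_apply_inl z.valid.2.2.1]
  intro h0
  have h3 := Finset.sum_eq_zero_iff.mp h0 ⟨j, hj⟩ (Finset.mem_univ _)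
  rw [if_pos] at h3
  · exact one_ne_zero h3
  · exact Prod.ext (Fin.ext (by simpa using h1.symm)) (by simpa using h2)

theorem wvar_inl_ne_zero_inl {q p : Fin m × Fin n}
    (h : wvar (m := m) (n := n) (Sum.inl q) (Sum.inl p) ≠ 0) : q = p := by
  classical
  rw [wvar, Finsupp.single_apply] at h
  by_cases hqp : q = p
  · exact hqp
  · rw [if_neg (by simpa using hqp)] at h; exact absurd rfl h

end Coord

section Inj
variable {K : Type*} [Field K] {m n : ℕ}

theorem zdata_ext (z z' : ZData m n) (ht : z.t = z'.t) (ha : z.a = z'.a)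
    (hcc : ∀ j (hj : j < z.t), z.c ⟨j, hj⟩ = z'.c ⟨j, ht ▸ hj⟩) : z = z' := by
  obtain ⟨t, a, v, c, hc⟩ := z
  obtain ⟨t', a', v', c', hc'⟩ := z'
  dsimp at ht ha hcc
  subst ht; subst ha
  have hcfun : c = c' := funext fun j => by
    have := hcc (j : ℕ) j.isLt
    simpa using this
  subst hcfun
  rfl

theorem label_eq_of_wvar {z z' : ZData m n} (h : wvar (m := m) (n := n) (Sum.inr z) = wvar (Sum.inr z')) :
    z.t = z'.t ∧ z.a = z'.a := by
  classical
  have h1 := DFunLike.congr_fun h (Sum.inr ⟨(z.t, z.a), z.valid⟩)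
  rw [show (wvar (m := m) (n := n) (Sum.inr z)) (Sum.inr ⟨(z.t, z.a), z.valid⟩) =
      wvar (Sum.inr z) (Sum.inr ⟨(z.t, z.a), z.valid⟩) from rfl] at h1
  erw [wvar_inr_apply_inr, wvar_inr_apply_inr, if_pos rfl] at h1
  by_cases hL : (⟨(z'.t, z'.a), z'.valid⟩ : TAIdx m n) = ⟨(z.t, z.a), z.valid⟩
  · have := Subtype.ext_iff.mp hL
    exact ⟨(Prod.ext_iff.mp this).1.symm, (Prod.ext_iff.mp this).2.symm⟩
  · rw [if_neg hL] at h1; exact absurd h1 one_ne_zero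

theorem wvar_inj : Function.Injective (wvar (m := m) (n := n)) := by
  classical
  intro v v' h
  cases v with
  | inl q =>
    cases v' with
    | inl q' =>
      have := DFunLike.congr_fun h (Sum.inl q)
      rw [show ∀ w, (wvar (m := m) (n := n) w) (Sum.inl q) = wvar w (Sum.inl q) from fun _ => rfl] at this
      have hq : q = q' := by
        by_contra hne
        rw [wvar, wvar, Finsupp.single_apply, Finsupp.single_apply, if_pos rfl,
          if_neg (by simpa using fun hh : q' = q => hne hh.symm)] at this
        exact one_ne_zero this
      rw [hq]
    | inr z' =>
      exfalso
      have h1 := DFunLike.congr_fun h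
        (Sum.inr (⟨(z'.t, z'.a), z'.valid⟩ : TAIdx m n))
      have h2 : wvar (m := m) (n := n) (Sum.inl q) (Sum.inr ⟨(z'.t, z'.a), z'.valid⟩) =
          wvar (Sum.inr z') (Sum.inr ⟨(z'.t, z'.a), z'.valid⟩) := h1
      erw [wvar_inl_apply_inr, wvar_inr_apply_inr, if_pos rfl] at h2
      exact one_ne_zero h2.symm
  | inr z =>
    cases v' with
    | inl q' =>
      exfalso
      have h1 : wvar (m := m) (n := n) (Sum.inr z) (Sum.inr ⟨(z.t, z.a), z.valid⟩) =
          wvar (Sum.inl q') (Sum.inr ⟨(z.t, z.a), z.valid⟩) := DFunLike.congr_fun h _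
      erw [wvar_inl_apply_inr, wvar_inr_apply_inr, if_pos rfl] at h1
      exact one_ne_zero h1
    | inr z' =>
      obtain ⟨ht, ha⟩ := label_eq_of_wvar h
      refine congrArg Sum.inr (zdata_ext z z' ht ha ?_)
      intro j hj
      have h1 : wvar (m := m) (n := n) (Sum.inr z)
          (Sum.inl (⟨j, lt_of_lt_of_le hj z.valid.2.2.1⟩, z.c ⟨j, hj⟩)) ≠ 0 := wvar_cover hj
      rw [h] at h1
      obtain ⟨hj', hc'⟩ := wvar_inr_ne_zero_inl h1
      dsimp at hj' hc'
      rw [← hc']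

theorem exists_label {d : SV m n →₀ ℕ} {L : TAIdx m n} (h : img d (Sum.inr L) ≠ 0) :
    ∃ z : ZData m n, Sum.inr z ∈ d.support ∧ (⟨(z.t, z.a), z.valid⟩ : TAIdx m n) = L := by
  classical
  obtain ⟨v, hv, hw⟩ := exists_of_img_ne_zero h
  cases v with
  | inl q => rw [wvar_inl_apply_inr] at hw; exact absurd rfl hw
  | inr z =>
    rw [wvar_inr_apply_inr] at hw
    by_cases hL : (⟨(z.t, z.a), z.valid⟩ : TAIdx m n) = L
    · exact ⟨z, hv, hL⟩
    · rw [if_neg hL] at hw; exact absurd rfl hw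

theorem label_pos {d : SV m n →₀ ℕ} {z : ZData m n} (hz : Sum.inr z ∈ d.support) :
    img d (Sum.inr ⟨(z.t, z.a), z.valid⟩) ≠ 0 := by
  have h1 := le_img hz (Sum.inr ⟨(z.t, z.a), z.valid⟩)
  erw [wvar_inr_apply_inr, if_pos rfl] at h1
  omega

theorem allx_img_apply {d : SV m n →₀ ℕ}
    (hall : ∀ v ∈ d.support, ∃ q, v = Sum.inl q) (q : Fin m × Fin n) :
    img d (Sum.inl q) = d (Sum.inl q) := by
  classical
  rw [img_apply]
  rw [Finset.sum_eq_single (Sum.inl q)]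
  · by_cases hq : Sum.inl q ∈ d.support
    · rw [wvar, Finsupp.single_apply, if_pos rfl, mul_one]
    · rw [Finsupp.notMem_support_iff.mp hq, zero_mul]
  · intro v hv hne
    obtain ⟨q', rfl⟩ := hall v hv
    rw [wvar, Finsupp.single_apply, if_neg (by simpa using fun hh : q' = q => hne (by rw [hh])),
      mul_zero]
  · intro hq
    rw [Finsupp.notMem_support_iff.mp hq, zero_mul]

theorem allx_eq {d e : SV m n →₀ ℕ}
    (hd : ∀ v ∈ d.support, ∃ q, v = Sum.inl q) (he : ∀ v ∈ e.support, ∃ q, v = Sum.inl q)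
    (him : img d = img e) : d = e := by
  ext v
  cases v with
  | inl q =>
    rw [← allx_img_apply hd q, ← allx_img_apply he q, him]
  | inr z =>
    have h1 : d (Sum.inr z) = 0 := by
      by_contra hne
      obtain ⟨q, hq⟩ := hd _ (Finsupp.mem_support_iff.mpr hne)
      cases hq
    have h2 : e (Sum.inr z) = 0 := by
      by_contra hne
      obtain ⟨q, hq⟩ := he _ (Finsupp.mem_support_iff.mpr hne)
      cases hq
    rw [h1, h2]

end Inj

section Cancel
variable {K : Type*} [Field K] {m n : ℕ}

theorem sub_single_add {d : SV m n →₀ ℕ} {v : SV m n} (hv : d v ≠ 0) :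
    (d - Finsupp.single v 1) + Finsupp.single v 1 = d := by
  classical
  ext x
  rcases eq_or_ne v x with rfl | hx
  · simp only [Finsupp.add_apply, Finsupp.tsub_apply, Finsupp.single_eq_same]
    have h1 : 1 ≤ d v := Nat.one_le_iff_ne_zero.mpr hv
    omega
  · simp only [Finsupp.add_apply, Finsupp.tsub_apply, Finsupp.single_eq_of_ne' hx]
    omega

theorem img_cancel {d e : SV m n →₀ ℕ} {v : SV m n} (him : img d = img e)
    (hvd : d v ≠ 0) (hve : e v ≠ 0) :
    img (d - Finsupp.single v 1) = img (e - Finsupp.single v 1) := by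
  have h1 : img (d - Finsupp.single v 1) + wvar v = img (e - Finsupp.single v 1) + wvar v := by
    have hd := img_add (d - Finsupp.single v 1) (Finsupp.single v 1)
    have he := img_add (e - Finsupp.single v 1) (Finsupp.single v 1)
    rw [sub_single_add hvd] at hd
    rw [sub_single_add hve] at he
    rw [img_single, one_smul] at hd he
    rw [← hd, ← he, him]
  ext x
  have := DFunLike.congr_fun h1 x
  simp only [Finsupp.coe_add, Pi.add_apply] at this
  omega

theorem degree_sub_single {d : SV m n →₀ ℕ} {v : SV m n} (hv : d v ≠ 0) :
    ((d - Finsupp.single v 1).sum fun _ k => k) + 1 = d.sum fun _ k => k := by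
  classical
  have h1 : ((d - Finsupp.single v 1) + Finsupp.single v 1).sum (fun _ k => k)
      = ((d - Finsupp.single v 1).sum fun _ k => k) + ((Finsupp.single v 1).sum fun _ k => k) :=
    Finsupp.sum_add_index' (fun _ => rfl) (fun _ _ _ => rfl)
  rw [sub_single_add hv] at h1
  rw [h1, Finsupp.sum_single_index rfl]

theorem monomial_sub_single {d : SV m n →₀ ℕ} {v : SV m n} (hv : d v ≠ 0) :
    (monomial d (1 : K) : PresRing K m n) =
      monomial (Finsupp.single v 1) (1 : K) * monomial (d - Finsupp.single v 1) 1 := by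
  rw [monomial_mul, one_mul]
  congr 1
  rw [add_comm, sub_single_add hv]

end Cancel

section MoveGeneric
variable {K : Type*} [Field K] {m n : ℕ}

theorem strictMono_aux {t : ℕ} {f : Fin t → Fin n}
    (h : ∀ j : ℕ, ∀ hj : j + 1 < t, f ⟨j, Nat.lt_of_succ_lt hj⟩ < f ⟨j + 1, hj⟩) :
    StrictMono f := by
  intro i j hij
  obtain ⟨i, hi⟩ := i
  obtain ⟨j, hj⟩ := j
  rw [Fin.mk_lt_mk] at hij
  induction j with
  | zero => omega
  | succ j IHj =>
    rcases Nat.lt_or_ge i j with hlt | hge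
    · exact lt_trans (IHj (Nat.lt_of_succ_lt hj) hlt) (h j hj)
    · have : i = j := by omega
      subst this
      exact h i hj

theorem necols_mk {t a : ℕ} {c : Fin t → Fin n} (hmono : StrictMono c)
    (h0 : ∀ h : 0 < t, a ≤ (c ⟨0, h⟩ : ℕ) + 1) : NEcols n t a c := by
  refine ⟨hmono, fun j => ?_⟩
  have h1 : (c ⟨0, lt_of_le_of_lt (Nat.zero_le _) j.isLt⟩ : ℕ) ≤ (c j : ℕ) := by
    have := hmono.monotone (a := ⟨0, lt_of_le_of_lt (Nat.zero_le _) j.isLt⟩) (b := j)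
      (by simp [Fin.le_def])
    exact_mod_cast this
  have h2 := h0 (lt_of_le_of_lt (Nat.zero_le _) j.isLt)
  omega

theorem dsing_congr {t t' : ℕ} {c : Fin t → Fin n} {c' : Fin t' → Fin n} {j : ℕ}
    (hj : j < t) (hj' : j < t') (hjm : j < m) (hcc : c ⟨j, hj⟩ = c' ⟨j, hj'⟩) :
    dsing m n t c j = dsing m n t' c' j := by
  rw [dsing_eq c hj hjm, dsing_eq c' hj' hjm, hcc]

def QuadSet (K : Type*) [Field K] (m n : ℕ) : Set (PresRing K m n) :=
  {f | ∃ d e : SV m n →₀ ℕ,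
    (d.sum fun _ k => k) = 2 ∧ (e.sum fun _ k => k) = 2 ∧
    PsiMap K m n (monomial d (1 : K)) = PsiMap K m n (monomial e (1 : K)) ∧
    f = monomial d (1 : K) - monomial e (1 : K)}

theorem deg_single_single (u1 u2 : SV m n) :
    ((Finsupp.single u1 1 + Finsupp.single u2 1).sum fun _ k => (k : ℕ)) = 2 := by
  rw [Finsupp.sum_add_index' (fun _ => rfl) (fun _ _ _ => rfl),
    Finsupp.sum_single_index rfl, Finsupp.sum_single_index rfl]

theorem quad_mem {u1 u2 v1 v2 : SV m n}
    (h : wvar u1 + wvar u2 = wvar (m := m) (n := n) v1 + wvar v2) :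
    (monomial (Finsupp.single u1 1 + Finsupp.single u2 1) (1 : K)
      - monomial (Finsupp.single v1 1 + Finsupp.single v2 1) 1) ∈ QuadSet K m n :=
  ⟨_, _, deg_single_single u1 u2, deg_single_single v1 v2, by
    rw [psi_monomial, psi_monomial, img_add, img_add, img_single, img_single, img_single,
      img_single, one_smul, one_smul, one_smul, one_smul, h], rfl⟩

theorem move_span {d : SV m n →₀ ℕ} {u1 u2 v1 v2 : SV m n}
    (hu1 : d u1 ≠ 0) (hu2 : (d - Finsupp.single u1 1 : SV m n →₀ ℕ) u2 ≠ 0)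
    (h : wvar u1 + wvar u2 = wvar (m := m) (n := n) v1 + wvar v2) :
    ∃ d₁ : SV m n →₀ ℕ,
      img d₁ = img d ∧ (d₁.sum fun _ x => x) = (d.sum fun _ x => x) ∧
      (∀ x, d₁ x = ((d - Finsupp.single u1 1) - Finsupp.single u2 1 : SV m n →₀ ℕ) x
              + (Finsupp.single v1 1 + Finsupp.single v2 1 : SV m n →₀ ℕ) x) ∧
      monomial d (1 : K) - monomial d₁ 1 ∈ Ideal.span (QuadSet K m n) := by
  set q := (d - Finsupp.single u1 1) - Finsupp.single u2 1 with hqdef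
  have hd : q + (Finsupp.single u1 1 + Finsupp.single u2 1) = d := by
    calc q + (Finsupp.single u1 1 + Finsupp.single u2 1)
        = (q + Finsupp.single u2 1) + Finsupp.single u1 1 := by abel
      _ = (d - Finsupp.single u1 1) + Finsupp.single u1 1 := by rw [hqdef, sub_single_add hu2]
      _ = d := sub_single_add hu1
  refine ⟨q + (Finsupp.single v1 1 + Finsupp.single v2 1), ?_, ?_, fun x => rfl, ?_⟩
  · rw [img_add, ← hd, img_add]
    congr 1
    rw [img_add, img_add, img_single, img_single, img_single, img_single,
      one_smul, one_smul, one_smul, one_smul, h]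
  · conv_rhs => rw [← hd]
    rw [Finsupp.sum_add_index' (fun _ => rfl) (fun _ _ _ => rfl),
      Finsupp.sum_add_index' (fun _ => rfl) (fun _ _ _ => rfl),
      Finsupp.sum_add_index' (fun _ => rfl) (fun _ _ _ => rfl),
      Finsupp.sum_add_index' (fun _ => rfl) (fun _ _ _ => rfl),
      Finsupp.sum_single_index rfl, Finsupp.sum_single_index rfl,
      Finsupp.sum_single_index rfl, Finsupp.sum_single_index rfl]
  · have h1 : (monomial d (1 : K) : PresRing K m n)
        = monomial q 1 * monomial (Finsupp.single u1 1 + Finsupp.single u2 1) 1 := by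
      rw [monomial_mul, one_mul, hd]
    have h2 : (monomial (q + (Finsupp.single v1 1 + Finsupp.single v2 1)) (1 : K) : PresRing K m n)
        = monomial q 1 * monomial (Finsupp.single v1 1 + Finsupp.single v2 1) 1 := by
      rw [monomial_mul, one_mul]
    rw [h1, h2, ← mul_sub]
    exact Ideal.mul_mem_left _ _ (Ideal.subset_span (quad_mem h))

end MoveGeneric

section MoveMain
variable {K : Type*} [Field K] {m n : ℕ}

theorem move_main {d : SV m n →₀ ℕ} {t a : ℕ} {hv : ValidPair m n (t, a)}
    {c : Fin t → Fin n} {hcz : NEcols n t a c} {ρ : ℕ} (hρ : ρ < t) {γ : Fin n}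
    (hz : d (Sum.inr ⟨t, a, hv, c, hcz⟩) ≠ 0)
    (hamax : ∀ z₂ : ZData m n, d (Sum.inr z₂) ≠ 0 → z₂.a ≤ a)
    (hsign : c ⟨ρ, hρ⟩ < γ)
    (hγtop : ∀ h : ρ + 1 < t, γ < c ⟨ρ + 1, h⟩)
    (hγa : a ≤ (γ : ℕ) + 1)
    (hcov : img d (Sum.inl (⟨ρ, lt_of_lt_of_le hρ hv.2.2.1⟩, γ)) ≠ 0) :
    ∃ (d₁ : SV m n →₀ ℕ) (c₃ : Fin t → Fin n) (hc₃ : NEcols n t a c₃),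
      img d₁ = img d ∧ (d₁.sum fun _ x => x) = (d.sum fun _ x => x) ∧
      d₁ (Sum.inr ⟨t, a, hv, c₃, hc₃⟩) ≠ 0 ∧
      (∀ z₂ : ZData m n, d₁ (Sum.inr z₂) ≠ 0 → z₂.a ≤ a) ∧
      c₃ ⟨ρ, hρ⟩ = γ ∧ (∀ r (hr : r < t), ρ < r → c₃ ⟨r, hr⟩ = c ⟨r, hr⟩) ∧
      monomial d (1 : K) - monomial d₁ 1 ∈ Ideal.span (QuadSet K m n) := by
  classical
  have htm : t ≤ m := hv.2.2.1
  set z : ZData m n := ⟨t, a, hv, c, hcz⟩ with hzdef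
  obtain ⟨v, hvmem, hw⟩ := exists_of_img_ne_zero hcov
  have hvd : d v ≠ 0 := Finsupp.mem_support_iff.mp hvmem
  have hvz : v ≠ Sum.inr z := by
    rintro rfl
    obtain ⟨hj, hcj⟩ := wvar_inr_ne_zero_inl hw
    exact absurd hcj (ne_of_lt hsign)
  have hu2 : (d - Finsupp.single (Sum.inr z) 1 : SV m n →₀ ℕ) v ≠ 0 := by
    rw [Finsupp.tsub_apply, Finsupp.single_apply, if_neg (fun h => hvz h.symm)]
    simpa using hvd
  cases v with
  | inl p =>
    have hp : p = (⟨ρ, lt_of_lt_of_le hρ hv.2.2.1⟩, γ) := wvar_inl_ne_zero_inl hw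
    subst hp
    set c₃ : Fin t → Fin n := fun j => if (j : ℕ) = ρ then γ else c j with hc3def
    have hc3ρ : c₃ ⟨ρ, hρ⟩ = γ := if_pos rfl
    have hc3ne : ∀ (j : Fin t), (j : ℕ) ≠ ρ → c₃ j = c j := fun j hj => if_neg hj
    have hmono : StrictMono c₃ := by
      apply strictMono_aux
      intro j hj1
      rcases eq_or_ne j ρ with rfl | hjρ
      · rw [show c₃ ⟨j, Nat.lt_of_succ_lt hj1⟩ = γ from if_pos rfl,
          hc3ne ⟨j + 1, hj1⟩ (by simp)]
        exact hγtop hj1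
      · rcases eq_or_ne (j + 1) ρ with hj1ρ | hj1ρ
        · rw [hc3ne ⟨j, Nat.lt_of_succ_lt hj1⟩ hjρ,
            show c₃ ⟨j + 1, hj1⟩ = γ from if_pos hj1ρ]
          have h6 : c ⟨j, Nat.lt_of_succ_lt hj1⟩ < c ⟨ρ, hρ⟩ :=
            hcz.1 (show (⟨j, Nat.lt_of_succ_lt hj1⟩ : Fin t) < ⟨ρ, hρ⟩ from by
              rw [Fin.mk_lt_mk]; omega)
          exact lt_trans h6 hsign
        · rw [hc3ne ⟨j, Nat.lt_of_succ_lt hj1⟩ hjρ, hc3ne ⟨j + 1, hj1⟩ hj1ρ]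
          exact hcz.1 (by rw [Fin.mk_lt_mk]; omega)
    have hc₃ : NEcols n t a c₃ := by
      apply necols_mk hmono
      intro h0
      rcases eq_or_ne ρ 0 with rfl | hρ0
      · rw [show c₃ ⟨0, h0⟩ = γ from if_pos rfl]; exact hγa
      · rw [hc3ne ⟨0, h0⟩ (fun h => hρ0 h.symm)]; exact hcz.2 _
    set z₃ : ZData m n := ⟨t, a, hv, c₃, hc₃⟩ with hz3def
    have hsplit : posSum m n t c + Finsupp.single (Sum.inl ((⟨ρ, lt_of_lt_of_le hρ htm⟩ : Fin m), γ)) 1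
        = posSum m n t c₃
          + Finsupp.single (Sum.inl ((⟨ρ, lt_of_lt_of_le hρ htm⟩ : Fin m), c ⟨ρ, hρ⟩)) 1 := by
      rw [posSum, posSum, Finset.sum_eq_sum_sdiff_singleton_add (Finset.mem_range.mpr hρ)
          (dsing m n t c), Finset.sum_eq_sum_sdiff_singleton_add (Finset.mem_range.mpr hρ)
          (dsing m n t c₃)]
      have hS : ∑ j ∈ Finset.range t \ {ρ}, dsing m n t c j
          = ∑ j ∈ Finset.range t \ {ρ}, dsing m n t c₃ j := by
        apply Finset.sum_congr rfl
        intro j hj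
        rw [Finset.mem_sdiff, Finset.mem_range, Finset.mem_singleton] at hj
        rw [dsing_eq c hj.1 (lt_of_lt_of_le hj.1 htm),
          dsing_eq c₃ hj.1 (lt_of_lt_of_le hj.1 htm), hc3ne ⟨j, hj.1⟩ hj.2]
      rw [hS, dsing_eq c hρ (lt_of_lt_of_le hρ htm), dsing_eq c₃ hρ (lt_of_lt_of_le hρ htm),
        hc3ρ]
      abel
    have himg : wvar (m := m) (n := n) (Sum.inr z)
          + wvar (Sum.inl ((⟨ρ, lt_of_lt_of_le hρ htm⟩ : Fin m), γ))
        = wvar (m := m) (n := n) (Sum.inr z₃)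
          + wvar (Sum.inl ((⟨ρ, lt_of_lt_of_le hρ htm⟩ : Fin m), c ⟨ρ, hρ⟩)) := by
      show (posSum m n t c + Finsupp.single (Sum.inr ⟨(t, a), hv⟩) 1)
            + Finsupp.single (Sum.inl ((⟨ρ, lt_of_lt_of_le hρ htm⟩ : Fin m), γ)) 1
          = (posSum m n t c₃ + Finsupp.single (Sum.inr ⟨(t, a), hv⟩) 1)
            + Finsupp.single (Sum.inl ((⟨ρ, lt_of_lt_of_le hρ htm⟩ : Fin m), c ⟨ρ, hρ⟩)) 1
      calc (posSum m n t c + Finsupp.single (Sum.inr (⟨(t, a), hv⟩ : TAIdx m n)) 1)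
            + Finsupp.single (Sum.inl ((⟨ρ, lt_of_lt_of_le hρ htm⟩ : Fin m), γ)) 1
          = (posSum m n t c
              + Finsupp.single (Sum.inl ((⟨ρ, lt_of_lt_of_le hρ htm⟩ : Fin m), γ)) 1)
            + Finsupp.single (Sum.inr (⟨(t, a), hv⟩ : TAIdx m n)) 1 := by abel
        _ = (posSum m n t c₃
              + Finsupp.single (Sum.inl ((⟨ρ, lt_of_lt_of_le hρ htm⟩ : Fin m), c ⟨ρ, hρ⟩)) 1)
            + Finsupp.single (Sum.inr (⟨(t, a), hv⟩ : TAIdx m n)) 1 := by rw [hsplit]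
        _ = _ := by abel
    obtain ⟨d₁, h_img, h_deg, h_pt, h_mem⟩ := move_span (K := K) hz hu2 himg
    refine ⟨d₁, c₃, hc₃, h_img, h_deg, ?_, ?_, hc3ρ, ?_, h_mem⟩
    · rw [h_pt]
      have h5 : (Finsupp.single (Sum.inr z₃ : SV m n) 1
          + Finsupp.single (Sum.inl ((⟨ρ, lt_of_lt_of_le hρ htm⟩ : Fin m), c ⟨ρ, hρ⟩)) 1
          : SV m n →₀ ℕ) (Sum.inr z₃) = 1 := by
        rw [Finsupp.add_apply, Finsupp.single_eq_same, Finsupp.single_apply,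
          if_neg (by simp)]
        rfl
      rw [h5]
      omega
    · intro z₂ h2
      rw [h_pt] at h2
      by_cases hq2 : d (Sum.inr z₂) ≠ 0
      · exact hamax z₂ hq2
      · push_neg at hq2
        have hqz : ((d - Finsupp.single (Sum.inr z) 1) - Finsupp.single
            (Sum.inl ((⟨ρ, lt_of_lt_of_le hρ htm⟩ : Fin m), γ)) 1 : SV m n →₀ ℕ)
            (Sum.inr z₂) = 0 := by
          rw [Finsupp.tsub_apply, Finsupp.tsub_apply, hq2]
          omega
        rw [hqz, zero_add, Finsupp.add_apply, Finsupp.single_apply, Finsupp.single_apply] at h2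
        by_cases h23 : z₃ = z₂
        · rw [← h23]
        · rw [if_neg (show (Sum.inr z₃ : SV m n) = Sum.inr z₂ → False from by
              simpa using h23),
            if_neg (show (Sum.inl ((⟨ρ, lt_of_lt_of_le hρ htm⟩ : Fin m), c ⟨ρ, hρ⟩) : SV m n)
              = Sum.inr z₂ → False from by simp)] at h2
          omega
    · intro r hr hρr
      exact hc3ne ⟨r, hr⟩ (by simp; omega)
  | inr z₂ =>
    obtain ⟨t₂, a₂, hv₂, c₂, hc₂⟩ := z₂
    have htm₂ : t₂ ≤ m := hv₂.2.2.1
    obtain ⟨hρ₂0, hγ₂0⟩ := wvar_inr_ne_zero_inl hw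
    have hρ₂ : ρ < t₂ := hρ₂0
    have hγ₂ : c₂ ⟨ρ, hρ₂⟩ = γ := hγ₂0
    have ha₂ : a₂ ≤ a := hamax _ hvd
    have castc : ∀ (i i' : ℕ) (h : i < t) (h' : i' < t), i = i' → c ⟨i, h⟩ = c ⟨i', h'⟩ :=
      fun i i' h h' e => by subst e; rfl
    have castc₂ : ∀ (i i' : ℕ) (h : i < t₂) (h' : i' < t₂), i = i' → c₂ ⟨i, h⟩ = c₂ ⟨i', h'⟩ :=
      fun i i' h h' e => by subst e; rfl
    set P : ℕ → Prop :=
      fun r => 0 < r ∧ ∃ (h1 : r - 1 < t₂) (h2 : r < t), c₂ ⟨r - 1, h1⟩ < c ⟨r, h2⟩ with hPdef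
    set s := Nat.findGreatest P ρ with hsdef
    have hsle : s ≤ ρ := Nat.findGreatest_le ρ
    have hfail : ∀ r, s < r → r ≤ ρ → ∀ (hr2 : r - 1 < t₂) (hrt : r < t),
        c ⟨r, hrt⟩ ≤ c₂ ⟨r - 1, hr2⟩ := by
      intro r h1 h2 hr2 hrt
      have hng := Nat.findGreatest_is_greatest (n := ρ) (P := P) h1 h2
      by_contra hlt
      push_neg at hlt
      exact hng ⟨by omega, hr2, hrt, hlt⟩
    have hPs : s ≠ 0 → ∃ (h1 : s - 1 < t₂) (h2 : s < t), c₂ ⟨s - 1, h1⟩ < c ⟨s, h2⟩ := by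
      intro h0
      exact (Nat.findGreatest_of_ne_zero hsdef.symm h0).2
    set c₃ : Fin t → Fin n := fun j =>
      if h : s ≤ (j : ℕ) ∧ (j : ℕ) ≤ ρ then c₂ ⟨(j : ℕ), lt_of_le_of_lt h.2 hρ₂⟩ else c j
      with hc3def
    set c₄ : Fin t₂ → Fin n := fun j =>
      if h : s ≤ (j : ℕ) ∧ (j : ℕ) ≤ ρ then c ⟨(j : ℕ), lt_of_le_of_lt h.2 hρ⟩ else c₂ j
      with hc4def
    have hc3in : ∀ (j : ℕ) (hjt : j < t) (h1 : s ≤ j) (h2 : j ≤ ρ),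
        c₃ ⟨j, hjt⟩ = c₂ ⟨j, lt_of_le_of_lt h2 hρ₂⟩ := by
      intro j hjt h1 h2
      show dite _ _ _ = _
      rw [dif_pos (show s ≤ ((⟨j, hjt⟩ : Fin t) : ℕ) ∧ ((⟨j, hjt⟩ : Fin t) : ℕ) ≤ ρ
        from ⟨h1, h2⟩)]
    have hc3out : ∀ (j : Fin t), ¬(s ≤ (j : ℕ) ∧ (j : ℕ) ≤ ρ) → c₃ j = c j :=
      fun j h => dif_neg h
    have hc4in : ∀ (j : ℕ) (hjt : j < t₂) (h1 : s ≤ j) (h2 : j ≤ ρ),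
        c₄ ⟨j, hjt⟩ = c ⟨j, lt_of_le_of_lt h2 hρ⟩ := by
      intro j hjt h1 h2
      show dite _ _ _ = _
      rw [dif_pos (show s ≤ ((⟨j, hjt⟩ : Fin t₂) : ℕ) ∧ ((⟨j, hjt⟩ : Fin t₂) : ℕ) ≤ ρ
        from ⟨h1, h2⟩)]
    have hc4out : ∀ (j : Fin t₂), ¬(s ≤ (j : ℕ) ∧ (j : ℕ) ≤ ρ) → c₄ j = c₂ j :=
      fun j h => dif_neg h
    have hmono3 : StrictMono c₃ := by
      apply strictMono_aux
      intro j hj1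
      by_cases hA : s ≤ j ∧ j ≤ ρ
      · by_cases hB : s ≤ j + 1 ∧ j + 1 ≤ ρ
        · rw [hc3in j (Nat.lt_of_succ_lt hj1) hA.1 hA.2, hc3in (j + 1) hj1 hB.1 hB.2]
          exact hc₂.1 (by rw [Fin.mk_lt_mk]; omega)
        · have hjρ : j = ρ := by omega
          rw [hc3in j (Nat.lt_of_succ_lt hj1) hA.1 hA.2,
            hc3out ⟨j + 1, hj1⟩ (by simp; omega)]
          rw [castc₂ j ρ _ hρ₂ hjρ, hγ₂]
          have := hγtop (by omega : ρ + 1 < t)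
          calc γ < c ⟨ρ + 1, by omega⟩ := this
            _ = c ⟨j + 1, hj1⟩ := castc _ _ _ _ (by omega)
      · by_cases hB : s ≤ j + 1 ∧ j + 1 ≤ ρ
        · have hs1 : s = j + 1 := by omega
          rw [hc3out ⟨j, Nat.lt_of_succ_lt hj1⟩ (by simp; omega),
            hc3in (j + 1) hj1 hB.1 hB.2]
          by_cases hjρ : j + 1 = ρ
          · rw [castc₂ (j + 1) ρ _ hρ₂ hjρ, hγ₂]
            have h6 : c ⟨j, Nat.lt_of_succ_lt hj1⟩ < c ⟨ρ, hρ⟩ :=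
              hcz.1 (by rw [Fin.mk_lt_mk]; omega)
            exact lt_trans h6 hsign
          · have h8 := hfail (j + 2) (by omega) (by omega) (by omega) (by omega)
            have h9 : c ⟨j, Nat.lt_of_succ_lt hj1⟩ < c ⟨j + 2, by omega⟩ :=
              hcz.1 (by rw [Fin.mk_lt_mk]; omega)
            have h10 : c₂ ⟨j + 2 - 1, by omega⟩ = c₂ ⟨j + 1, lt_of_le_of_lt hB.2 hρ₂⟩ :=
              castc₂ _ _ _ _ (by omega)
            rw [← h10]
            exact lt_of_lt_of_le h9 h8
        · rw [hc3out ⟨j, Nat.lt_of_succ_lt hj1⟩ hA, hc3out ⟨j + 1, hj1⟩ hB]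
          exact hcz.1 (by rw [Fin.mk_lt_mk]; omega)
    have hmono4 : StrictMono c₄ := by
      apply strictMono_aux
      intro j hj1
      by_cases hA : s ≤ j ∧ j ≤ ρ
      · by_cases hB : s ≤ j + 1 ∧ j + 1 ≤ ρ
        · rw [hc4in j (Nat.lt_of_succ_lt hj1) hA.1 hA.2, hc4in (j + 1) hj1 hB.1 hB.2]
          exact hcz.1 (by rw [Fin.mk_lt_mk]; omega)
        · have hjρ : j = ρ := by omega
          rw [hc4in j (Nat.lt_of_succ_lt hj1) hA.1 hA.2,
            hc4out ⟨j + 1, hj1⟩ (by simp; omega)]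
          have h6 : c ⟨j, lt_of_le_of_lt hA.2 hρ⟩ < γ := by
            rw [castc j ρ _ hρ hjρ]; exact hsign
          have h7 : γ < c₂ ⟨j + 1, hj1⟩ := by
            rw [← hγ₂]
            exact hc₂.1 (by rw [Fin.mk_lt_mk]; omega)
          exact lt_trans h6 h7
      · by_cases hB : s ≤ j + 1 ∧ j + 1 ≤ ρ
        · have hs1 : s = j + 1 := by omega
          rw [hc4out ⟨j, Nat.lt_of_succ_lt hj1⟩ (by simp; omega),
            hc4in (j + 1) hj1 hB.1 hB.2]
          obtain ⟨hq1, hq2, hq3⟩ := hPs (by omega)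
          calc c₂ ⟨j, Nat.lt_of_succ_lt hj1⟩ = c₂ ⟨s - 1, hq1⟩ := castc₂ _ _ _ _ (by omega)
            _ < c ⟨s, hq2⟩ := hq3
            _ = c ⟨j + 1, lt_of_le_of_lt hB.2 hρ⟩ := castc _ _ _ _ (by omega)
        · rw [hc4out ⟨j, Nat.lt_of_succ_lt hj1⟩ hA, hc4out ⟨j + 1, hj1⟩ hB]
          exact hc₂.1 (by rw [Fin.mk_lt_mk]; omega)
    have hc₃ : NEcols n t a c₃ := by
      apply necols_mk hmono3
      intro h0
      by_cases hs0 : s = 0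
      · rw [hc3in 0 h0 (by omega) (by omega)]
        by_cases hρ0 : ρ = 0
        · rw [castc₂ 0 ρ _ hρ₂ hρ0.symm, hγ₂]
          exact hγa
        · have hp11 : 1 - 1 < t₂ := by omega
          have h1t : (1 : ℕ) < t := by omega
          have h8 := hfail 1 (by omega) (by omega) hp11 h1t
          have h9 : c ⟨0, h0⟩ < c ⟨1, h1t⟩ := hcz.1 (by rw [Fin.mk_lt_mk]; omega)
          have h10 : c₂ ⟨1 - 1, hp11⟩ = c₂ ⟨0, lt_of_le_of_lt (Nat.zero_le ρ) hρ₂⟩ :=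
            castc₂ _ _ _ _ (by omega)
          have h12 := hcz.2 ⟨0, h0⟩
          have h8' : (c ⟨1, h1t⟩ : ℕ) ≤ (c₂ ⟨1 - 1, hp11⟩ : ℕ) := h8
          have h9' : (c ⟨0, h0⟩ : ℕ) < (c ⟨1, h1t⟩ : ℕ) := h9
          have h10' : (c₂ ⟨1 - 1, hp11⟩ : ℕ)
              = (c₂ ⟨0, lt_of_le_of_lt (Nat.zero_le ρ) hρ₂⟩ : ℕ) := congrArg Fin.val h10
          omega
      · rw [hc3out ⟨0, h0⟩ (by simp; omega)]
        exact hcz.2 _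
    have hc₄ : NEcols n t₂ a₂ c₄ := by
      apply necols_mk hmono4
      intro h0
      by_cases hs0 : s = 0
      · rw [hc4in 0 h0 (by omega) (by omega)]
        have h12 := hcz.2 ⟨0, lt_of_le_of_lt (Nat.zero_le _) hρ⟩
        have h13 : c ⟨0, lt_of_le_of_lt (by omega : (0:ℕ) ≤ ρ) hρ⟩
            = c ⟨0, lt_of_le_of_lt (Nat.zero_le _) hρ⟩ := castc _ _ _ _ rfl
        rw [h13]
        omega
      · rw [hc4out ⟨0, h0⟩ (by simp; omega)]
        exact hc₂.2 _
    set z₃ : ZData m n := ⟨t, a, hv, c₃, hc₃⟩ with hz3def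
    set z₄ : ZData m n := ⟨t₂, a₂, hv₂, c₄, hc₄⟩ with hz4def
    have hffA : (Finset.range t).filter (fun j => s ≤ j ∧ j ≤ ρ)
        = (Finset.range t₂).filter (fun j => s ≤ j ∧ j ≤ ρ) := by
      ext j
      simp only [Finset.mem_filter, Finset.mem_range]
      constructor
      · rintro ⟨h1, h2⟩; exact ⟨by omega, h2⟩
      · rintro ⟨h1, h2⟩; exact ⟨by omega, h2⟩
    have hpos : posSum m n t c + posSum m n t₂ c₂ = posSum m n t c₃ + posSum m n t₂ c₄ := by
      have h1 : posSum m n t c₃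
          = (∑ j ∈ (Finset.range t).filter (fun j => s ≤ j ∧ j ≤ ρ), dsing m n t₂ c₂ j)
            + ∑ j ∈ (Finset.range t).filter (fun j => ¬(s ≤ j ∧ j ≤ ρ)), dsing m n t c j := by
        rw [posSum, ← Finset.sum_filter_add_sum_filter_not (Finset.range t)
          (fun j => s ≤ j ∧ j ≤ ρ) (dsing m n t c₃)]
        congr 1
        · apply Finset.sum_congr rfl
          intro j hj
          rw [Finset.mem_filter, Finset.mem_range] at hj
          exact dsing_congr hj.1 (lt_of_le_of_lt hj.2.2 hρ₂) (lt_of_lt_of_le hj.1 htm)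
            (hc3in j hj.1 hj.2.1 hj.2.2)
        · apply Finset.sum_congr rfl
          intro j hj
          rw [Finset.mem_filter, Finset.mem_range] at hj
          exact dsing_congr hj.1 hj.1 (lt_of_lt_of_le hj.1 htm) (hc3out ⟨j, hj.1⟩ hj.2)
      have h2 : posSum m n t₂ c₄
          = (∑ j ∈ (Finset.range t₂).filter (fun j => s ≤ j ∧ j ≤ ρ), dsing m n t c j)
            + ∑ j ∈ (Finset.range t₂).filter (fun j => ¬(s ≤ j ∧ j ≤ ρ)), dsing m n t₂ c₂ j := by
        rw [posSum, ← Finset.sum_filter_add_sum_filter_not (Finset.range t₂)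
          (fun j => s ≤ j ∧ j ≤ ρ) (dsing m n t₂ c₄)]
        congr 1
        · apply Finset.sum_congr rfl
          intro j hj
          rw [Finset.mem_filter, Finset.mem_range] at hj
          exact dsing_congr hj.1 (lt_of_le_of_lt hj.2.2 hρ) (lt_of_lt_of_le hj.1 htm₂)
            (hc4in j hj.1 hj.2.1 hj.2.2)
        · apply Finset.sum_congr rfl
          intro j hj
          rw [Finset.mem_filter, Finset.mem_range] at hj
          exact dsing_congr hj.1 hj.1 (lt_of_lt_of_le hj.1 htm₂) (hc4out ⟨j, hj.1⟩ hj.2)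
      have h3 : posSum m n t c
          = (∑ j ∈ (Finset.range t).filter (fun j => s ≤ j ∧ j ≤ ρ), dsing m n t c j)
            + ∑ j ∈ (Finset.range t).filter (fun j => ¬(s ≤ j ∧ j ≤ ρ)), dsing m n t c j := by
        rw [posSum, ← Finset.sum_filter_add_sum_filter_not (Finset.range t)
          (fun j => s ≤ j ∧ j ≤ ρ) (dsing m n t c)]
      have h4 : posSum m n t₂ c₂
          = (∑ j ∈ (Finset.range t₂).filter (fun j => s ≤ j ∧ j ≤ ρ), dsing m n t₂ c₂ j)
            + ∑ j ∈ (Finset.range t₂).filter (fun j => ¬(s ≤ j ∧ j ≤ ρ)), dsing m n t₂ c₂ j := by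
        rw [posSum, ← Finset.sum_filter_add_sum_filter_not (Finset.range t₂)
          (fun j => s ≤ j ∧ j ≤ ρ) (dsing m n t₂ c₂)]
      rw [h1, h2, h3, h4, hffA]
      abel
    have himg : wvar (m := m) (n := n) (Sum.inr z)
          + wvar (Sum.inr ⟨t₂, a₂, hv₂, c₂, hc₂⟩)
        = wvar (m := m) (n := n) (Sum.inr z₃) + wvar (Sum.inr z₄) := by
      show (posSum m n t c + Finsupp.single (Sum.inr ⟨(t, a), hv⟩) 1)
            + (posSum m n t₂ c₂ + Finsupp.single (Sum.inr ⟨(t₂, a₂), hv₂⟩) 1)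
          = (posSum m n t c₃ + Finsupp.single (Sum.inr ⟨(t, a), hv⟩) 1)
            + (posSum m n t₂ c₄ + Finsupp.single (Sum.inr ⟨(t₂, a₂), hv₂⟩) 1)
      calc (posSum m n t c + Finsupp.single (Sum.inr (⟨(t, a), hv⟩ : TAIdx m n)) 1)
            + (posSum m n t₂ c₂ + Finsupp.single (Sum.inr (⟨(t₂, a₂), hv₂⟩ : TAIdx m n)) 1)
          = (posSum m n t c + posSum m n t₂ c₂)
            + (Finsupp.single (Sum.inr (⟨(t, a), hv⟩ : TAIdx m n)) 1
              + Finsupp.single (Sum.inr (⟨(t₂, a₂), hv₂⟩ : TAIdx m n)) 1) := by abel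
        _ = (posSum m n t c₃ + posSum m n t₂ c₄)
            + (Finsupp.single (Sum.inr (⟨(t, a), hv⟩ : TAIdx m n)) 1
              + Finsupp.single (Sum.inr (⟨(t₂, a₂), hv₂⟩ : TAIdx m n)) 1) := by rw [hpos]
        _ = _ := by abel
    obtain ⟨d₁, h_img, h_deg, h_pt, h_mem⟩ := move_span (K := K) hz hu2 himg
    refine ⟨d₁, c₃, hc₃, h_img, h_deg, ?_, ?_, ?_, ?_, h_mem⟩
    · rw [h_pt, Finsupp.add_apply, Finsupp.single_eq_same]
      omega
    · intro w h2
      rw [h_pt] at h2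
      by_cases hq2 : d (Sum.inr w) ≠ 0
      · exact hamax w hq2
      · push_neg at hq2
        have hqz : ((d - Finsupp.single (Sum.inr z) 1)
            - Finsupp.single (Sum.inr (⟨t₂, a₂, hv₂, c₂, hc₂⟩ : ZData m n)) 1 : SV m n →₀ ℕ)
            (Sum.inr w) = 0 := by
          rw [Finsupp.tsub_apply, Finsupp.tsub_apply, hq2]
          omega
        rw [hqz, zero_add, Finsupp.add_apply, Finsupp.single_apply, Finsupp.single_apply] at h2
        by_cases h23 : z₃ = w
        · rw [← h23]
        · by_cases h24 : z₄ = w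
          · rw [← h24]
            exact ha₂
          · rw [if_neg (show (Sum.inr z₃ : SV m n) = Sum.inr w → False from by
                simpa using h23),
              if_neg (show (Sum.inr z₄ : SV m n) = Sum.inr w → False from by
                simpa using h24)] at h2
            omega
    · rw [hc3in ρ hρ hsle le_rfl]
      exact hγ₂
    · intro r hr hρr
      exact hc3out ⟨r, hr⟩ (by simp; omega)

end MoveMain

section Helper
variable {K : Type*} [Field K] {m n : ℕ}

theorem helper (k : ℕ)
    (IH : ∀ d' e' : SV m n →₀ ℕ, (d'.sum fun _ x => x) < k → img d' = img e' →
      monomial d' (1 : K) - monomial e' 1 ∈ Ideal.span (QuadSet K m n)) :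
    ∀ ρ : ℕ, ∀ d e : SV m n →₀ ℕ, ∀ t a : ℕ, ∀ hv : ValidPair m n (t, a),
    ∀ c c' : Fin t → Fin n, ∀ hcz : NEcols n t a c, ∀ hcz' : NEcols n t a c',
    d (Sum.inr ⟨t, a, hv, c, hcz⟩) ≠ 0 → e (Sum.inr ⟨t, a, hv, c', hcz'⟩) ≠ 0 →
    (d.sum fun _ x => x) = k → img d = img e →
    (∀ z₂ : ZData m n, d (Sum.inr z₂) ≠ 0 → z₂.a ≤ a) →
    (∀ z₂ : ZData m n, e (Sum.inr z₂) ≠ 0 → z₂.a ≤ a) →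
    (∀ r (hr : r < t), ρ ≤ r → c ⟨r, hr⟩ = c' ⟨r, hr⟩) →
    monomial d (1 : K) - monomial e 1 ∈ Ideal.span (QuadSet K m n) := by
  intro ρ
  induction ρ with
  | zero =>
    intro d e t a hv c c' hcz hcz' hd he hk him hamaxd hamaxe hagree
    have hcc : c = c' := funext fun j => by
      have := hagree (j : ℕ) j.isLt (Nat.zero_le _)
      simpa using this
    subst hcc
    set w : SV m n := Sum.inr ⟨t, a, hv, c, hcz⟩ with hwdef
    have hew : e w ≠ 0 := he
    have hk1 : ((d - Finsupp.single w 1).sum fun _ x => x) < k := by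
      have h1 := degree_sub_single (d := d) (v := w) hd
      omega
    have him' := img_cancel him hd hew
    have hbin := IH _ _ hk1 him'
    have h1 : (monomial d (1 : K) : PresRing K m n)
        = monomial (Finsupp.single w 1) 1 * monomial (d - Finsupp.single w 1) 1 :=
      monomial_sub_single hd
    have h2 : (monomial e (1 : K) : PresRing K m n)
        = monomial (Finsupp.single w 1) 1 * monomial (e - Finsupp.single w 1) 1 :=
      monomial_sub_single hew
    rw [h1, h2, ← mul_sub]
    exact Ideal.mul_mem_left _ _ hbin
  | succ ρ IHρ =>
    intro d e t a hv c c' hcz hcz' hd he hk him hamaxd hamaxe hagree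
    by_cases hρt : ρ < t
    · by_cases heq : c ⟨ρ, hρt⟩ = c' ⟨ρ, hρt⟩
      · apply IHρ d e t a hv c c' hcz hcz' hd he hk him hamaxd hamaxe
        intro r hr hρr
        rcases eq_or_lt_of_le hρr with h | h
        · subst h
          exact heq
        · exact hagree r hr (by omega)
      · rcases lt_or_gt_of_ne heq with hlt | hgt
        · -- move on d towards γ = c' ρ
          have hcov : img d (Sum.inl ((⟨ρ, lt_of_lt_of_le hρt hv.2.2.1⟩ : Fin m),
              c' ⟨ρ, hρt⟩)) ≠ 0 := by
            rw [him]
            intro h0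
            have h2 := wvar_cover' (z := ⟨t, a, hv, c', hcz'⟩) (j := ρ) hρt
              ((⟨ρ, lt_of_lt_of_le hρt hv.2.2.1⟩ : Fin m), c' ⟨ρ, hρt⟩) rfl rfl
            have h1 := le_img (Finsupp.mem_support_iff.mpr he)
              (Sum.inl ((⟨ρ, lt_of_lt_of_le hρt hv.2.2.1⟩ : Fin m), c' ⟨ρ, hρt⟩))
            rw [h0] at h1
            exact h2 (Nat.le_zero.mp h1)
          have hγtop : ∀ h : ρ + 1 < t, c' ⟨ρ, hρt⟩ < c ⟨ρ + 1, h⟩ := by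
            intro h
            rw [hagree (ρ + 1) h (le_refl _)]
            exact hcz'.1 (by rw [Fin.mk_lt_mk]; omega)
          obtain ⟨d₁, c₃, hc₃, h_img, h_deg, h_z3, h_amax, h_cρ, h_high, h_mem⟩ :=
            move_main (K := K) hρt hd hamaxd hlt hγtop (hcz'.2 ⟨ρ, hρt⟩) hcov
          have hrec := IHρ d₁ e t a hv c₃ c' hc₃ hcz' h_z3 he (by rw [h_deg, hk])
            (by rw [h_img, him]) h_amax hamaxe ?_
          · have hsum : (monomial d (1 : K) : PresRing K m n) - monomial e 1
                = (monomial d 1 - monomial d₁ 1) + (monomial d₁ 1 - monomial e 1) := by ring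
            rw [hsum]
            exact Ideal.add_mem _ h_mem hrec
          · intro r hr hρr
            rcases eq_or_lt_of_le hρr with h | h
            · subst h
              exact h_cρ
            · rw [h_high r hr (by omega)]
              exact hagree r hr (by omega)
        · -- move on e towards γ = c ρ
          have hcov : img e (Sum.inl ((⟨ρ, lt_of_lt_of_le hρt hv.2.2.1⟩ : Fin m),
              c ⟨ρ, hρt⟩)) ≠ 0 := by
            rw [← him]
            intro h0
            have h2 := wvar_cover' (z := ⟨t, a, hv, c, hcz⟩) (j := ρ) hρt
              ((⟨ρ, lt_of_lt_of_le hρt hv.2.2.1⟩ : Fin m), c ⟨ρ, hρt⟩) rfl rfl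
            have h1 := le_img (Finsupp.mem_support_iff.mpr hd)
              (Sum.inl ((⟨ρ, lt_of_lt_of_le hρt hv.2.2.1⟩ : Fin m), c ⟨ρ, hρt⟩))
            rw [h0] at h1
            exact h2 (Nat.le_zero.mp h1)
          have hγtop : ∀ h : ρ + 1 < t, c ⟨ρ, hρt⟩ < c' ⟨ρ + 1, h⟩ := by
            intro h
            rw [← hagree (ρ + 1) h (le_refl _)]
            exact hcz.1 (by rw [Fin.mk_lt_mk]; omega)
          obtain ⟨e₁, c₃, hc₃, h_img, h_deg, h_z3, h_amax, h_cρ, h_high, h_mem⟩ :=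
            move_main (K := K) hρt he hamaxe hgt hγtop (hcz.2 ⟨ρ, hρt⟩) hcov
          have hrec := IHρ d e₁ t a hv c c₃ hcz hc₃ hd h_z3 hk
            (by rw [him, h_img]) hamaxd h_amax ?_
          · have hsum : (monomial d (1 : K) : PresRing K m n) - monomial e 1
                = (monomial d 1 - monomial e₁ 1) - (monomial e 1 - monomial e₁ 1) := by ring
            rw [hsum]
            exact Ideal.sub_mem _ hrec h_mem
          · intro r hr hρr
            rcases eq_or_lt_of_le hρr with h | h
            · subst h
              exact h_cρ.symm
            · rw [h_high r hr (by omega)]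
              exact hagree r hr (by omega)
    · apply IHρ d e t a hv c c' hcz hcz' hd he hk him hamaxd hamaxe
      intro r hr hρr
      exact absurd hρr (by omega)

end Helper

section Connect
variable {K : Type*} [Field K] {m n : ℕ}

theorem connect : ∀ (k : ℕ) (d e : SV m n →₀ ℕ), (d.sum fun _ x => x) = k → img d = img e →
    monomial d (1 : K) - monomial e 1 ∈ Ideal.span (QuadSet K m n) := by
  intro k
  induction k using Nat.strong_induction_on with
  | _ k IH =>
  intro d e hk him
  classical
  have IH' : ∀ d' e' : SV m n →₀ ℕ, (d'.sum fun _ x => x) < k → img d' = img e' →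
      monomial d' (1 : K) - monomial e' 1 ∈ Ideal.span (QuadSet K m n) :=
    fun d' e' h him' => IH _ h d' e' rfl him'
  by_cases hdz : ∃ z : ZData m n, d (Sum.inr z) ≠ 0
  · set aOf : SV m n → ℕ := fun v => match v with
      | Sum.inl _ => 0
      | Sum.inr z => z.a
      with haOf
    set F := d.support ∪ e.support with hF
    obtain ⟨z0, hz0⟩ := hdz
    have hz0F : Sum.inr z0 ∈ F := Finset.mem_union_left _ (Finsupp.mem_support_iff.mpr hz0)
    obtain ⟨v0, hv0F, hv0⟩ := Finset.exists_mem_eq_sup F ⟨_, hz0F⟩ aOf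
    have hApos : 1 ≤ F.sup aOf := by
      have h1 : aOf (Sum.inr z0) ≤ F.sup aOf := Finset.le_sup hz0F
      have h2 : 1 ≤ z0.a := z0.valid.2.1
      have h3 : aOf (Sum.inr z0) = z0.a := rfl
      omega
    cases v0 with
    | inl q =>
      rw [hv0] at hApos
      exact absurd hApos (by simp [haOf])
    | inr zm =>
    have hmaxF : ∀ z₂ : ZData m n, Sum.inr z₂ ∈ F → z₂.a ≤ zm.a := by
      intro z₂ h2
      have h3 := Finset.le_sup (f := aOf) h2
      rw [hv0] at h3
      exact h3
    have hLd : img d (Sum.inr ⟨(zm.t, zm.a), zm.valid⟩) ≠ 0 := by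
      rcases Finset.mem_union.mp hv0F with h | h
      · exact label_pos h
      · rw [him]; exact label_pos h
    obtain ⟨z, hzd, hlabz⟩ := exists_label hLd
    have hLe : img e (Sum.inr ⟨(zm.t, zm.a), zm.valid⟩) ≠ 0 := by rw [← him]; exact hLd
    obtain ⟨z', hz'e, hlabz'⟩ := exists_label hLe
    have hzd' : d (Sum.inr z) ≠ 0 := Finsupp.mem_support_iff.mp hzd
    have hz'e' : e (Sum.inr z') ≠ 0 := Finsupp.mem_support_iff.mp hz'e
    have hpz := Prod.ext_iff.mp (congrArg Subtype.val hlabz)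
    have hpz' := Prod.ext_iff.mp (congrArg Subtype.val hlabz')
    obtain ⟨tz, az, hvz, cz, hcz⟩ := z
    obtain ⟨tz', az', hvz', cz', hcz'⟩ := z'
    dsimp at hpz hpz' hzd' hz'e'
    have het : tz' = tz := by omega
    subst het
    have hea : az' = az := by omega
    subst hea
    have hmaxd : ∀ z₂ : ZData m n, d (Sum.inr z₂) ≠ 0 → z₂.a ≤ az' := by
      intro z₂ h2
      have h3 := hmaxF z₂ (Finset.mem_union_left _ (Finsupp.mem_support_iff.mpr h2))
      omega
    have hmaxe : ∀ z₂ : ZData m n, e (Sum.inr z₂) ≠ 0 → z₂.a ≤ az' := by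
      intro z₂ h2
      have h3 := hmaxF z₂ (Finset.mem_union_right _ (Finsupp.mem_support_iff.mpr h2))
      omega
    exact helper k IH' tz' d e tz' az' hvz cz cz' hcz hcz' hzd' hz'e' hk him hmaxd hmaxe
      (fun r hr hρr => absurd hρr (by omega))
  · push_neg at hdz
    have hdall : ∀ v ∈ d.support, ∃ q, v = Sum.inl q := by
      intro v hv
      cases v with
      | inl q => exact ⟨q, rfl⟩
      | inr z => exact absurd (hdz z) (Finsupp.mem_support_iff.mp hv)
    have heall : ∀ v ∈ e.support, ∃ q, v = Sum.inl q := by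
      intro v hv
      cases v with
      | inl q => exact ⟨q, rfl⟩
      | inr z =>
        exfalso
        have h1 := label_pos hv
        rw [← him] at h1
        obtain ⟨z₂, hz₂, _⟩ := exists_label h1
        exact absurd (hdz z₂) (Finsupp.mem_support_iff.mp hz₂)
    rw [allx_eq hdall heall him]
    simp

end Connect

theorem final (K : Type*) [Field K] (m n : ℕ) :
    RingHom.ker (PsiMap K m n : PresRing K m n →+* ReesAmbient K m n) =
      Ideal.span (QuadSet K m n) := by
  apply le_antisymm
  · intro f hf
    have hker : PsiMap K m n f = 0 := hf
    have h1 := ker_mem_span_binAll f hker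
    have h2 : Ideal.span (BinAll K m n) ≤ Ideal.span (QuadSet K m n) := by
      refine Ideal.span_le.mpr ?_
      rintro g ⟨d, e, him, rfl⟩
      exact connect _ d e rfl him
    exact h2 h1
  · refine Ideal.span_le.mpr ?_
    rintro g ⟨d, e, hd2, he2, hpsi, rfl⟩
    have : PsiMap K m n (monomial d (1 : K) - monomial e 1) = 0 := by
      rw [map_sub, hpsi, sub_self]
    exact this

end Quad

/-- The kernel of `Ψ` is generated by homogeneous binomials of degree
`2`: elements `Z₁ - Z₂` with `Z₁, Z₂` degree-2 monomials of `𝒮` such that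
`Ψ(Z₁) = Ψ(Z₂)`. -/
theorem ker_PsiMap_generated_by_quadratic_binomials (K : Type*) [Field K] (m n : ℕ)
    (hm : 1 ≤ m) (hmn : m ≤ n) :
    RingHom.ker (PsiMap K m n : PresRing K m n →+* ReesAmbient K m n) =
      Ideal.span {f | ∃ d e : ((Fin m × Fin n) ⊕ ZData m n) →₀ ℕ,
        (d.sum fun _ k => k) = 2 ∧ (e.sum fun _ k => k) = 2 ∧
        PsiMap K m n (monomial d (1 : K)) = PsiMap K m n (monomial e (1 : K)) ∧
        f = monomial d (1 : K) - monomial e (1 : K)} := by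
  have h : {f | ∃ d e : ((Fin m × Fin n) ⊕ ZData m n) →₀ ℕ,
        (d.sum fun _ k => k) = 2 ∧ (e.sum fun _ k => k) = 2 ∧
        PsiMap K m n (monomial d (1 : K)) = PsiMap K m n (monomial e (1 : K)) ∧
        f = monomial d (1 : K) - monomial e (1 : K)} = Quad.QuadSet K m n := rfl
  rw [h]
  exact Quad.final K m n
end

section
/- Let t_1 ≥ t_2 ≥ … ≥ t_p be positive integers with t_1 ≤ m and let Δ = δ_1⋯δ_p be a tableau of shape (t_1,…,t_p), i.e., each δ_i is a t_i-minor of the first t_i rows of X. Then there exists a unique standard tableau Σ = σ_1⋯σ_p of the same shape (t_1,…,t_p) such that in(Δ) = in(Σ), where in(δ_1⋯δ_p) = in(δ_1)⋯in(δ_p) is the product of the diagonals of the factors. -/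
open MvPolynomial

/-- The diagonal monomial `in(δ) = x_{1 b₁} ⋯ x_{t b_t}` of the `t`-minor with columns
`c` of the first `t` rows of the generic `m × n` matrix of indeterminates. -/
noncomputable def diagP (K : Type*) [Field K] (m n : ℕ) {t : ℕ} (c : Fin t → Fin n) :
    MvPolynomial (Fin m × Fin n) K :=
  ∏ j : Fin t,
    if h : (j : ℕ) < m then (X (⟨(j : ℕ), h⟩, c j) : MvPolynomial (Fin m × Fin n) K) else 0

namespace StdTabAux

variable {α : Type*} [LinearOrder α]

lemma get_lt_of_lt_countP {l : List α} (hl : l.Pairwise (· ≤ ·)) {v : α} {i : ℕ}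
    (hi : i < l.length) (h : i < l.countP (fun x => decide (x < v))) :
    l.get ⟨i, hi⟩ < v := by
  by_contra hcon
  push_neg at hcon
  have hz : (l.drop i).countP (fun x => decide (x < v)) = 0 := by
    rw [List.countP_eq_zero]
    intro a ha
    obtain ⟨j, hj, rfl⟩ := List.mem_iff_getElem.1 ha
    rw [List.getElem_drop]
    simp only [decide_eq_true_eq, not_lt]
    refine le_trans hcon ?_
    have hij : i ≤ i + j := Nat.le_add_right _ _
    have hlt : i + j < l.length := by
      rw [List.length_drop] at hj; omega
    exact hl.rel_get_of_le (a := ⟨i, hi⟩) (b := ⟨i + j, hlt⟩) hij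
  have hle : l.countP (fun x => decide (x < v)) ≤ i := by
    conv_lhs => rw [← List.take_append_drop i l]
    rw [List.countP_append, hz, Nat.add_zero]
    refine le_trans List.countP_le_length ?_
    rw [List.length_take]
    exact min_le_left _ _
  omega

lemma succ_le_countP_of_sorted {l : List α} (hl : l.Pairwise (· ≤ ·)) {i : ℕ}
    (hi : i < l.length) :
    i + 1 ≤ l.countP (fun x => decide (x ≤ l.get ⟨i, hi⟩)) := by
  have hall : ∀ a ∈ l.take (i + 1), (fun x => decide (x ≤ l.get ⟨i, hi⟩)) a = true := by
    intro a ha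
    obtain ⟨j, hj, rfl⟩ := List.mem_iff_getElem.1 ha
    rw [List.length_take] at hj
    have hj1 : j < l.length := lt_of_lt_of_le hj (min_le_right _ _)
    have hji : j ≤ i := by omega
    rw [List.getElem_take]
    simp only [decide_eq_true_eq]
    exact hl.rel_get_of_le (a := ⟨j, hj1⟩) (b := ⟨i, hi⟩) hji
  have h1 : (l.take (i + 1)).countP (fun x => decide (x ≤ l.get ⟨i, hi⟩)) = i + 1 := by
    rw [List.countP_eq_length.2 hall, List.length_take]
    omega
  calc i + 1 = _ := h1.symm
    _ ≤ _ := (List.take_prefix (i+1) l).countP_le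

lemma sort_map_get_lt {ι : Type*} {S T : Finset ι} (hST : S ⊆ T)
    {f g : ι → α} (hfg : ∀ j ∈ S, f j < g j) {i : ℕ}
    (hiS : i < (Multiset.sort (S.val.map g) (· ≤ ·)).length)
    (hiT : i < (Multiset.sort (T.val.map f) (· ≤ ·)).length) :
    (Multiset.sort (T.val.map f) (· ≤ ·)).get ⟨i, hiT⟩
      < (Multiset.sort (S.val.map g) (· ≤ ·)).get ⟨i, hiS⟩ := by
  classical
  set b := Multiset.sort (S.val.map g) (· ≤ ·) with hbdef
  set a := Multiset.sort (T.val.map f) (· ≤ ·) with hadef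
  set v := b.get ⟨i, hiS⟩ with hvdef
  have h1 : i + 1 ≤ b.countP (fun x => decide (x ≤ v)) :=
    succ_le_countP_of_sorted (Multiset.pairwise_sort _ _) hiS
  have hbm : b.countP (fun x => decide (x ≤ v))
      = Multiset.countP (fun x => x ≤ v) (S.val.map g) := by
    conv_rhs => rw [← Multiset.sort_eq (S.val.map g) (· ≤ ·), ← hbdef]
    rw [Multiset.coe_countP]
  have hS2 : Multiset.countP (fun x => x ≤ v) (S.val.map g)
      = (S.filter (fun j => g j ≤ v)).card := by
    rw [Multiset.countP_map, Finset.card_def, Finset.filter_val, ← Multiset.countP_eq_card_filter]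
  have h2 : i + 1 ≤ (S.filter (fun j => g j ≤ v)).card := by
    rw [← hS2, ← hbm]; exact h1
  have h3 : (S.filter (fun j => g j ≤ v)).card ≤ (T.filter (fun j => f j < v)).card := by
    refine Finset.card_le_card ?_
    intro j hj
    rw [Finset.mem_filter] at hj ⊢
    exact ⟨hST hj.1, lt_of_lt_of_le (hfg j hj.1) hj.2⟩
  have h4 : (T.filter (fun j => f j < v)).card
      = a.countP (fun x => decide (x < v)) := by
    have ham : a.countP (fun x => decide (x < v))
        = Multiset.countP (fun x => x < v) (T.val.map f) := by
      conv_rhs => rw [← Multiset.sort_eq (T.val.map f) (· ≤ ·), ← hadef]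
      rw [Multiset.coe_countP]
    rw [ham, Multiset.countP_map, Finset.card_def, Finset.filter_val,
      ← Multiset.countP_eq_card_filter]
  have h5 : i < a.countP (fun x => decide (x < v)) := by omega
  exact get_lt_of_lt_countP (l := a) (Multiset.pairwise_sort _ _) hiT h5

lemma mem_iff_val_lt_card {p : ℕ} {S : Finset (Fin p)}
    (hS : ∀ ⦃i j : Fin p⦄, i ≤ j → j ∈ S → i ∈ S) (i : Fin p) : i ∈ S ↔ (i : ℕ) < S.card := by
  constructor
  · intro hi
    have hsub : Finset.Iic i ⊆ S := fun j hj => hS (Finset.mem_Iic.1 hj) hi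
    have := Finset.card_le_card hsub
    rw [Fin.card_Iic] at this
    omega
  · intro hi
    by_contra hni
    have hsub : S ⊆ Finset.Iio i := by
      intro j hj
      rw [Finset.mem_Iio]
      by_contra hij
      exact hni (hS (le_of_not_gt hij) hj)
    have := Finset.card_le_card hsub
    rw [Fin.card_Iio] at this
    omega

lemma ofFn_get_eq {β : Type*} (l : List β) {q : ℕ} (h : q = l.length) :
    List.ofFn (fun j : Fin q => l.get ⟨j.1, h ▸ j.2⟩) = l := by
  subst h
  exact List.ofFn_get l

lemma val_map_eq_ofFn {p : ℕ} {β : Type*} {S : Finset (Fin p)}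
    (hS : ∀ i : Fin p, i ∈ S ↔ (i : ℕ) < S.card) (hcard : S.card ≤ p) (f : Fin p → β) :
    S.val.map f = ↑(List.ofFn (fun j : Fin S.card => f (Fin.castLE hcard j))) := by
  have hSeq : S = Finset.map (Fin.castLEEmb hcard) Finset.univ := by
    ext x
    rw [hS x]
    constructor
    · intro hx
      exact Finset.mem_map.2 ⟨⟨x.1, hx⟩, Finset.mem_univ _, by ext; rfl⟩
    · intro hx
      obtain ⟨j, -, rfl⟩ := Finset.mem_map.1 hx
      simp only [Fin.castLEEmb_apply, Fin.coe_castLE]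
      exact j.2
  conv_lhs => rw [hSeq, Finset.map_val, Multiset.map_map, Fin.univ_val_map]
  rfl

lemma prod_monomial_one {K : Type*} [CommSemiring K] {σ' : Type*} {ι : Type*} (s : Finset ι)
    (d : ι → (σ' →₀ ℕ)) :
    (∏ i ∈ s, (monomial (d i) (1 : K))) = monomial (∑ i ∈ s, d i) 1 := by
  induction s using Finset.cons_induction with
  | empty => simp
  | cons a s ha ih => rw [Finset.prod_cons, Finset.sum_cons, ih, monomial_mul, one_mul]

end StdTabAux

def rowSet (p : ℕ) (t : Fin p → ℕ) (k : ℕ) : Finset (Fin p) :=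
  Finset.univ.filter fun i => k < t i

def entryF {n p : ℕ} {t : Fin p → ℕ} (v0 : Fin n) (d : ∀ i : Fin p, Fin (t i) → Fin n)
    (k : ℕ) (i : Fin p) : Fin n :=
  if h : k < t i then d i ⟨k, h⟩ else v0

lemma diagP_eq_prod_fin_m {K : Type*} [Field K] {m n : ℕ} {a : ℕ} (ha : a ≤ m)
    (d : Fin a → Fin n) :
    diagP K m n d = ∏ k : Fin m,
      if h : (k : ℕ) < a then (X (k, d ⟨k, h⟩) : MvPolynomial (Fin m × Fin n) K) else 1 := by
  rw [diagP, Finset.prod_congr rfl (fun j _ => dif_pos (lt_of_lt_of_le j.2 ha))]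
  set G : ℕ → MvPolynomial (Fin m × Fin n) K := fun k =>
    if h : k < a ∧ k < m then X (⟨k, h.2⟩, d ⟨k, h.1⟩) else 1 with hG
  have h1 : ∀ j : Fin a, (X ((⟨j.1, lt_of_lt_of_le j.2 ha⟩ : Fin m), d j)
      : MvPolynomial (Fin m × Fin n) K) = G j.1 := by
    intro j
    rw [show G j.1 = X (⟨j.1, lt_of_lt_of_le j.2 ha⟩, d ⟨j.1, j.2⟩) from
      dif_pos ⟨j.2, lt_of_lt_of_le j.2 ha⟩]
  have h2 : ∀ k : Fin m, (if h : (k : ℕ) < a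
      then (X (k, d ⟨k, h⟩) : MvPolynomial (Fin m × Fin n) K) else 1) = G k.1 := by
    intro k
    by_cases h : (k : ℕ) < a
    · rw [dif_pos h, show G k.1 = X (⟨k.1, k.2⟩, d ⟨k.1, h⟩) from dif_pos ⟨h, k.2⟩]
    · rw [dif_neg h, show G k.1 = 1 from dif_neg (by tauto)]
  rw [Finset.prod_congr rfl (fun j _ => h1 j), Finset.prod_congr rfl (fun k _ => h2 k),
    Fin.prod_univ_eq_prod_range, Fin.prod_univ_eq_prod_range]
  refine Finset.prod_subset (Finset.range_subset_range.2 ha) ?_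
  intro k hk hks
  rw [Finset.mem_range] at hk
  rw [Finset.mem_range] at hks
  exact dif_neg (by tauto)

noncomputable def rowL {n p : ℕ} (t : Fin p → ℕ) (v0 : Fin n)
    (c : ∀ i : Fin p, Fin (t i) → Fin n) (k : ℕ) : List (Fin n) :=
  Multiset.sort ((rowSet p t k).val.map (entryF v0 c k)) (· ≤ ·)


/-- Proposition `uni-init`. Let `t_1 ≥ ⋯ ≥ t_p` (with `t_1 ≤ m`) and
let `Δ = δ_1⋯δ_p` be a tableau of shape `(t_1,…,t_p)`, the minor `δ_i` having (strictly
increasing) columns `c i`. Then there is a unique standard tableau `Σ = σ_1⋯σ_p` of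
the same shape with `in(Δ) = in(Σ)`, standardness meaning `σ_i ≤_str σ_j` for `i ≤ j`,
i.e. the `k`-th column of `σ_i` is `≤` the `k`-th column of `σ_j` for all `k ≤ t_j`. -/
theorem exists_unique_standard_tableau (K : Type*) [Field K] (m n : ℕ)
    (hm : 1 ≤ m) (hmn : m ≤ n) (p : ℕ) (t : Fin p → ℕ)
    (hval : ∀ i, 1 ≤ t i ∧ t i ≤ m)
    (hdec : ∀ i j : Fin p, i ≤ j → t j ≤ t i)
    (c : ∀ i : Fin p, Fin (t i) → Fin n) (hc : ∀ i, StrictMono (c i)) :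
    ∃! σ : ∀ i : Fin p, Fin (t i) → Fin n,
      (∀ i, StrictMono (σ i)) ∧
      (∀ (i j : Fin p) (hij : i ≤ j) (k : Fin (t j)),
        σ i (Fin.castLE (hdec i j hij) k) ≤ σ j k) ∧
      ∏ i, diagP K m n (σ i) = ∏ i, diagP K m n (c i) := by
  have hn0 : 0 < n := lt_of_lt_of_le hm hmn
  have hts : ∀ i : Fin p, t i ≤ m := fun i => (hval i).2
  set v0 : Fin n := ⟨0, hn0⟩ with hv0
  have hRSmem : ∀ (k : ℕ) (i : Fin p), i ∈ rowSet p t k ↔ k < t i := by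
    intro k i; simp [rowSet]
  have hRSlow : ∀ (k : ℕ), ∀ ⦃i j : Fin p⦄, i ≤ j → j ∈ rowSet p t k → i ∈ rowSet p t k := by
    intro k i j hij hj
    exact (hRSmem k i).2 (lt_of_lt_of_le ((hRSmem k j).1 hj) (hdec i j hij))
  have hRSpref : ∀ (k : ℕ) (i : Fin p), i ∈ rowSet p t k ↔ (i : ℕ) < (rowSet p t k).card :=
    fun k i => StdTabAux.mem_iff_val_lt_card (hRSlow k) i
  have hRScard : ∀ k, (rowSet p t k).card ≤ p := fun k =>
    le_trans (Finset.card_le_univ _) (by simp)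
  have hLlen : ∀ k, (rowL t v0 c k).length = (rowSet p t k).card := by
    intro k; simp [rowL]
  have hlen : ∀ (i : Fin p) (k : ℕ), k < t i → (i : ℕ) < (rowL t v0 c k).length := by
    intro i k hk; rw [hLlen]; exact (hRSpref k i).1 ((hRSmem k i).2 hk)
  set σf : ∀ i : Fin p, Fin (t i) → Fin n :=
    fun i k => (rowL t v0 c k.1).get ⟨i.1, hlen i k.1 k.2⟩ with hσf
  -- row multiset description via ofFn
  have hrow : ∀ (d : ∀ i : Fin p, Fin (t i) → Fin n) (k : ℕ),
      (rowSet p t k).val.map (entryF v0 d k)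
        = ↑(List.ofFn (fun j : Fin (rowSet p t k).card =>
            entryF v0 d k (Fin.castLE (hRScard k) j))) :=
    fun d k => StdTabAux.val_map_eq_ofFn (hRSpref k) (hRScard k) _
  -- rows of σf have same multisets as rows of c
  have hrowσ : ∀ k : ℕ, (rowSet p t k).val.map (entryF v0 σf k)
      = (rowSet p t k).val.map (entryF v0 c k) := by
    intro k
    rw [hrow σf k]
    have heq : (fun j : Fin (rowSet p t k).card => entryF v0 σf k (Fin.castLE (hRScard k) j))
        = fun j : Fin (rowSet p t k).card =>
            (rowL t v0 c k).get ⟨j.1, (hLlen k).symm ▸ j.2⟩ := by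
      funext j
      have hjm : (Fin.castLE (hRScard k) j) ∈ rowSet p t k := by
        rw [hRSpref]
        exact j.2
      have hkt : k < t (Fin.castLE (hRScard k) j) := (hRSmem k _).1 hjm
      show entryF v0 σf k (Fin.castLE (hRScard k) j) = _
      rw [entryF, dif_pos hkt]
      rfl
    rw [heq, StdTabAux.ofFn_get_eq (rowL t v0 c k) (hLlen k).symm]
    exact (Multiset.sort_eq _ _)
  -- strict monotonicity
  have hsub : ∀ k : ℕ, rowSet p t (k+1) ⊆ rowSet p t k := by
    intro k i hi
    have := (hRSmem (k+1) i).1 hi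
    exact (hRSmem k i).2 (by omega)
  have hstep : ∀ (i : Fin p) (k : ℕ) (hk1 : k + 1 < t i) (hk0 : k < t i),
      (rowL t v0 c k).get ⟨i.1, hlen i k hk0⟩
        < (rowL t v0 c (k+1)).get ⟨i.1, hlen i (k+1) hk1⟩ := by
    intro i k hk1 hk0
    refine StdTabAux.sort_map_get_lt (hsub k) ?_ ?_ ?_
    intro j hj
    have hj1 : k + 1 < t j := (hRSmem (k+1) j).1 hj
    have hj0 : k < t j := by omega
    show entryF v0 c k j < entryF v0 c (k+1) j
    rw [entryF, entryF, dif_pos hj1, dif_pos hj0]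
    exact hc j (Fin.mk_lt_mk.2 (Nat.lt_succ_self k))
  have hmono : ∀ i : Fin p, StrictMono (σf i) := by
    intro i x y hxy
    have key : ∀ b : ℕ, x.1 + 1 ≤ b → ∀ hb : b < t i,
        (rowL t v0 c x.1).get ⟨i.1, hlen i x.1 x.2⟩
          < (rowL t v0 c b).get ⟨i.1, hlen i b hb⟩ := by
      intro b hab
      induction b, hab using Nat.le_induction with
      | base => intro hb; exact hstep i x.1 hb x.2
      | succ b hb ih =>
        intro hb1
        exact lt_trans (ih (by omega)) (hstep i b hb1 (by omega))
    exact key y.1 hxy y.2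
  -- comparability
  have hcomp : ∀ (i j : Fin p) (hij : i ≤ j) (k : Fin (t j)),
      σf i (Fin.castLE (hdec i j hij) k) ≤ σf j k := by
    intro i j hij k
    exact (Multiset.pairwise_sort (α := Fin n) _ (· ≤ ·)).rel_get_of_le
      (a := ⟨i.1, hlen i k.1 (lt_of_lt_of_le k.2 (hdec i j hij))⟩)
      (b := ⟨j.1, hlen j k.1 k.2⟩) hij
  -- product formula, row by row
  have hprod : ∀ d : ∀ i : Fin p, Fin (t i) → Fin n,
      ∏ i, diagP K m n (d i)
        = ∏ k : Fin m, (Multiset.map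
            (fun i => (X (k, entryF v0 d k.1 i) : MvPolynomial (Fin m × Fin n) K))
            (rowSet p t k.1).val).prod := by
    intro d
    rw [Finset.prod_congr rfl (fun i _ => diagP_eq_prod_fin_m (hts i) (d i)), Finset.prod_comm]
    refine Finset.prod_congr rfl fun k _ => ?_
    have hite : ∀ i : Fin p, (if h : (k : ℕ) < t i
        then (X (k, d i ⟨k.1, h⟩) : MvPolynomial (Fin m × Fin n) K) else 1)
        = if (k : ℕ) < t i then X (k, entryF v0 d k.1 i) else 1 := by
      intro i
      by_cases h : (k : ℕ) < t i
      · rw [dif_pos h, if_pos h, entryF, dif_pos h]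
      · rw [dif_neg h, if_neg h]
    rw [Finset.prod_congr rfl (fun i _ => hite i), ← Finset.prod_filter,
      Finset.prod_eq_multiset_prod]
    rfl
  have h3 : ∏ i, diagP K m n (σf i) = ∏ i, diagP K m n (c i) := by
    rw [hprod σf, hprod c]
    refine Finset.prod_congr rfl fun k _ => ?_
    have hmm : ∀ d : ∀ i : Fin p, Fin (t i) → Fin n,
        Multiset.map (fun i => (X (k, entryF v0 d k.1 i) : MvPolynomial (Fin m × Fin n) K))
          (rowSet p t k.1).val
        = Multiset.map (fun v => (X (k, v) : MvPolynomial (Fin m × Fin n) K))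
            ((rowSet p t k.1).val.map (entryF v0 d k.1)) := by
      intro d
      rw [Multiset.map_map]
      rfl
    rw [hmm σf, hmm c, hrowσ k.1]
  -- monomial description
  have hdiagm : ∀ d : ∀ i : Fin p, Fin (t i) → Fin n,
      ∏ i, diagP K m n (d i) = monomial (∑ i : Fin p, ∑ j : Fin (t i),
        Finsupp.single ((⟨j.1, lt_of_lt_of_le j.2 (hts i)⟩ : Fin m), d i j) 1) (1 : K) := by
    intro d
    have h1 : ∀ i : Fin p, diagP K m n (d i) = monomial (∑ j : Fin (t i),
        Finsupp.single ((⟨j.1, lt_of_lt_of_le j.2 (hts i)⟩ : Fin m), d i j) 1) (1 : K) := by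
      intro i
      rw [diagP, Finset.prod_congr rfl (fun j _ => dif_pos (lt_of_lt_of_le j.2 (hts i)))]
      exact StdTabAux.prod_monomial_one Finset.univ _
    rw [Finset.prod_congr rfl fun i _ => h1 i]
    exact StdTabAux.prod_monomial_one _ _
  -- count description
  have hcount : ∀ (d : ∀ i : Fin p, Fin (t i) → Fin n) (k : Fin m) (v : Fin n),
      (∑ i : Fin p, ∑ j : Fin (t i),
        Finsupp.single ((⟨j.1, lt_of_lt_of_le j.2 (hts i)⟩ : Fin m), d i j) 1) (k, v)
        = Multiset.count v (Multiset.map (entryF v0 d k.1) (rowSet p t k.1).val) := by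
    intro d k v
    rw [Finsupp.finset_sum_apply]
    have inner : ∀ i : Fin p,
        (∑ j : Fin (t i),
          Finsupp.single ((⟨j.1, lt_of_lt_of_le j.2 (hts i)⟩ : Fin m), d i j) 1) ((k, v))
          = if (k : ℕ) < t i ∧ v = entryF v0 d k.1 i then 1 else 0 := by
      intro i
      rw [Finsupp.finset_sum_apply]
      by_cases h : (k : ℕ) < t i
      · rw [Finset.sum_eq_single (⟨k.1, h⟩ : Fin (t i))]
        · rw [Finsupp.single_apply]
          have hent : entryF v0 d k.1 i = d i ⟨k.1, h⟩ := dif_pos h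
          by_cases hv : d i ⟨k.1, h⟩ = v
          · rw [if_pos (by rw [hv]), if_pos ⟨h, by rw [hent, hv]⟩]
          · rw [if_neg (by
              intro hcon
              exact hv (congrArg Prod.snd hcon)), if_neg (by
              rintro ⟨-, hcon⟩
              exact hv (by rw [hent] at hcon; exact hcon.symm))]
        · intro j _ hne
          rw [Finsupp.single_apply, if_neg]
          intro hcon
          apply hne
          have h1 : ((⟨j.1, lt_of_lt_of_le j.2 (hts i)⟩ : Fin m)) = k := congrArg Prod.fst hcon
          have h2 : j.1 = k.1 := congrArg Fin.val h1
          exact Fin.ext h2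
        · intro habs
          exact absurd (Finset.mem_univ _) habs
      · rw [if_neg (by tauto), Finset.sum_eq_zero]
        intro j _
        rw [Finsupp.single_apply, if_neg]
        intro hcon
        have h1 : ((⟨j.1, lt_of_lt_of_le j.2 (hts i)⟩ : Fin m)) = k := congrArg Prod.fst hcon
        have h2 : j.1 = k.1 := congrArg Fin.val h1
        have := j.2
        omega
    rw [Finset.sum_congr rfl fun i _ => inner i, Multiset.count_map]
    have hcards : Multiset.card
        (Multiset.filter (fun a => v = entryF v0 d k.1 a) (rowSet p t k.1).val)
        = (Finset.filter (fun i => (k : ℕ) < t i ∧ v = entryF v0 d k.1 i) Finset.univ).card := by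
      rw [← Finset.filter_val, rowSet, Finset.filter_filter]
      rfl
    rw [hcards, Finset.card_filter]
  -- rows determined by the product of diagonals
  have hrows : ∀ (τ : ∀ i : Fin p, Fin (t i) → Fin n),
      (∏ i, diagP K m n (τ i) = ∏ i, diagP K m n (c i)) →
      ∀ k : Fin m, Multiset.map (entryF v0 τ k.1) (rowSet p t k.1).val
        = Multiset.map (entryF v0 c k.1) (rowSet p t k.1).val := by
    intro τ h3' k
    rw [hdiagm τ, hdiagm c] at h3'
    have hD := (((monomial_eq_monomial_iff _ _ _ _).1 h3').resolve_right (by simp)).1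
    refine Multiset.ext.2 fun v => ?_
    rw [← hcount τ k v, ← hcount c k v, hD]
  refine ⟨σf, ⟨hmono, hcomp, h3⟩, ?_⟩
  intro τ ⟨hτ1, hτ2, hτ3⟩
  funext i k
  have hr : (k : ℕ) < m := lt_of_lt_of_le k.2 (hts i)
  have hMeq : Multiset.map (entryF v0 τ k.1) (rowSet p t k.1).val
      = Multiset.map (entryF v0 c k.1) (rowSet p t k.1).val := hrows τ hτ3 ⟨k.1, hr⟩
  set Lτ : List (Fin n) := List.ofFn (fun j : Fin (rowSet p t k.1).card =>
    entryF v0 τ k.1 (Fin.castLE (hRScard k.1) j)) with hLτ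
  have hLτcoe : (Lτ : Multiset (Fin n)) = ((rowL t v0 c k.1 : List (Fin n)) : Multiset (Fin n)) := by
    rw [hLτ, ← hrow τ k.1, hMeq]
    exact (Multiset.sort_eq _ _).symm
  have hLτsorted : Lτ.Pairwise (· ≤ ·) := by
    rw [hLτ]
    refine List.pairwise_ofFn.2 ?_
    intro a b hab
    have hbm : (Fin.castLE (hRScard k.1) b) ∈ rowSet p t k.1 := by
      rw [hRSpref]; exact b.2
    have hbt : k.1 < t (Fin.castLE (hRScard k.1) b) := (hRSmem _ _).1 hbm
    have ham : (Fin.castLE (hRScard k.1) a) ∈ rowSet p t k.1 := by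
      rw [hRSpref]; exact a.2
    have hat : k.1 < t (Fin.castLE (hRScard k.1) a) := (hRSmem _ _).1 ham
    show entryF v0 τ k.1 _ ≤ entryF v0 τ k.1 _
    rw [entryF, entryF, dif_pos hat, dif_pos hbt]
    exact hτ2 _ _ (le_of_lt (by
      rw [Fin.lt_def]
      exact hab)) ⟨k.1, hbt⟩
  have hLL : Lτ = rowL t v0 c k.1 :=
    (Multiset.coe_eq_coe.1 hLτcoe).eq_of_pairwise' hLτsorted
      (Multiset.pairwise_sort _ _)
  have hik : i ∈ rowSet p t k.1 := (hRSmem _ _).2 k.2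
  have hiq : (i : ℕ) < (rowSet p t k.1).card := (hRSpref _ _).1 hik
  have hiL : (i : ℕ) < Lτ.length := by rw [hLτ, List.length_ofFn]; exact hiq
  have h1 : Lτ.get ⟨i.1, hiL⟩ = τ i k := by
    refine (List.get_ofFn (fun j : Fin (rowSet p t k.1).card =>
      entryF v0 τ k.1 (Fin.castLE (hRScard k.1) j)) ⟨i.1, hiL⟩).trans ?_
    exact dif_pos k.2
  have h2 : Lτ.get ⟨i.1, hiL⟩ = (rowL t v0 c k.1).get ⟨i.1, hlen i k.1 k.2⟩ := by
    have := List.get_of_eq hLL ⟨i.1, hiL⟩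
    rw [this]
  rw [← h1, h2]
end
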